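/- arXiv:0810.4298 — 7 statements merged into one kernel-verified Lean document; each statement's English description precedes it below -/
import Mathlib

section
/- Let x, x_0 ∈ X_d with x_0 in the closure of the orbit A_d·x in X_d. If x_0 is GL, then x is GL. -/
open scoped BigOperators

noncomputable section

/-- `SL_d(ℝ)`. -/
abbrev SLd (d : ℕ) := Matrix.SpecialLinearGroup (Fin d) ℝ

/-- The unimodular lattice `gℤ^d ⊆ ℝ^d`. -/
def latticeOf {d : ℕ} (g : SLd d) : Set (Fin d → ℝ) :=
  Set.range fun m : Fin d → ℤ => (g : Matrix (Fin d) (Fin d) ℝ).mulVec fun i => (m i : ℝ)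

/-- A unimodular lattice in `ℝ^d` is a set of the form `gℤ^d` for some `g ∈ SL_d(ℝ)`. -/
def IsUnimodularLattice {d : ℕ} (x : Set (Fin d → ℝ)) : Prop :=
  ∃ g : SLd d, x = latticeOf g

/-- The grid `x + v`. -/
def grid {d : ℕ} (x : Set (Fin d → ℝ)) (v : Fin d → ℝ) : Set (Fin d → ℝ) :=
  (fun u => u + v) '' x

/-- `N(y) = inf {|∏ i, w i| : w ∈ y}`. -/
def Ngrid {d : ℕ} (y : Set (Fin d → ℝ)) : ℝ :=
  sInf {r : ℝ | ∃ w ∈ y, r = |∏ i, w i|}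

/-- The grid `x + v` is L (Littlewood): `inf {|n|·N(x + nv) : n ∈ ℤ, n ≠ 0} = 0`. -/
def IsL {d : ℕ} (x : Set (Fin d → ℝ)) (v : Fin d → ℝ) : Prop :=
  sInf {r : ℝ | ∃ n : ℤ, n ≠ 0 ∧ r = |(n : ℝ)| * Ngrid (grid x ((n : ℝ) • v))} = 0

/-- The grid `x + v` is FL (L of finite type): `N(x + nv) = 0` for some nonzero integer `n`. -/
def IsFL {d : ℕ} (x : Set (Fin d → ℝ)) (v : Fin d → ℝ) : Prop :=
  ∃ n : ℤ, n ≠ 0 ∧ Ngrid (grid x ((n : ℝ) • v)) = 0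

/-- A lattice `x` is GL if every grid `x + v` is L. -/
def IsGL {d : ℕ} (x : Set (Fin d → ℝ)) : Prop := ∀ v : Fin d → ℝ, IsL x v

/-- A lattice `x` is GFL if every grid `x + v` is FL. -/
def IsGFL {d : ℕ} (x : Set (Fin d → ℝ)) : Prop := ∀ v : Fin d → ℝ, IsFL x v

/-- The topology on `SL_d(ℝ)` induced from the space of matrices. -/
instance (d : ℕ) : TopologicalSpace (SLd d) :=
  TopologicalSpace.induced (fun g : SLd d => (g : Matrix (Fin d) (Fin d) ℝ)) inferInstance

/-- Two elements of `SL_d(ℝ)` are identified iff they span the same lattice. -/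
instance latSetoid (d : ℕ) : Setoid (SLd d) where
  r g h := latticeOf g = latticeOf h
  iseqv := ⟨fun _ => rfl, Eq.symm, Eq.trans⟩

/-- The space `X_d` of unimodular lattices in `ℝ^d`, as the quotient `SL_d(ℝ)/SL_d(ℤ)`
with the quotient topology. -/
def XSp (d : ℕ) := Quotient (latSetoid d)

instance (d : ℕ) : TopologicalSpace (XSp d) := instTopologicalSpaceQuotient

/-- The lattice (a subset of `ℝ^d`) corresponding to a point of `X_d`. -/
def latticeOfX {d : ℕ} : XSp d → Set (Fin d → ℝ) := Quotient.lift latticeOf fun _ _ h => h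

/-- `a ∈ A_d`: a diagonal matrix with positive diagonal entries (and determinant one,
since `a ∈ SL_d(ℝ)`). -/
def IsDiag {d : ℕ} (a : SLd d) : Prop :=
  (∀ i, 0 < (a : Matrix (Fin d) (Fin d) ℝ) i i) ∧
    ∀ i j, i ≠ j → (a : Matrix (Fin d) (Fin d) ℝ) i j = 0

/-- The orbit `A_d · z ⊆ X_d` of a lattice `z ∈ X_d` under the group `A_d` of diagonal
matrices with positive entries and determinant one. -/
def Aorbit {d : ℕ} (z : XSp d) : Set (XSp d) :=
  {w | ∃ a g : SLd d, IsDiag a ∧ z = Quotient.mk (latSetoid d) g ∧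
      w = Quotient.mk (latSetoid d) (a * g)}

namespace AuxGL

variable {d : ℕ}

abbrev Mat (d : ℕ) := Matrix (Fin d) (Fin d) ℝ

def cvec (m : Fin d → ℤ) : Fin d → ℝ := fun i => (m i : ℝ)

lemma mem_latticeOf {g : SLd d} {w : Fin d → ℝ} :
    w ∈ latticeOf g ↔ ∃ m : Fin d → ℤ, (g : Mat d).mulVec (cvec m) = w := Set.mem_range

lemma mulVec_mem (g : SLd d) (m : Fin d → ℤ) : (g : Mat d).mulVec (cvec m) ∈ latticeOf g :=
  ⟨m, rfl⟩

lemma zero_mem (g : SLd d) : (0 : Fin d → ℝ) ∈ latticeOf g := by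
  refine ⟨0, ?_⟩
  show (g : Mat d).mulVec (cvec 0) = 0
  have : cvec (0 : Fin d → ℤ) = 0 := by funext i; simp [cvec]
  rw [this, Matrix.mulVec_zero]

lemma cast_mulVec (γ : Matrix (Fin d) (Fin d) ℤ) (m : Fin d → ℤ) :
    (γ.map (Int.cast : ℤ → ℝ)).mulVec (cvec m) = cvec (γ.mulVec m) := by
  funext i
  simp [Matrix.mulVec, dotProduct, cvec, Matrix.map_apply]

def IsIntMat (γ : SLd d) : Prop :=
  ∃ γ' : Matrix (Fin d) (Fin d) ℤ, (γ : Mat d) = γ'.map (Int.cast : ℤ → ℝ)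

lemma isUnit_det (g : SLd d) : IsUnit ((g : Mat d).det) := by
  rw [Matrix.SpecialLinearGroup.det_coe]; exact isUnit_one

lemma latticeOf_mul_int (g γ : SLd d) (h1 : IsIntMat γ) (h2 : IsIntMat γ⁻¹) :
    latticeOf (g * γ) = latticeOf g := by
  obtain ⟨c, hc⟩ := h1
  obtain ⟨c', hc'⟩ := h2
  apply Set.eq_of_subset_of_subset
  · rintro w ⟨m, rfl⟩
    refine ⟨c.mulVec m, ?_⟩
    show (g : Mat d).mulVec (cvec (c.mulVec m)) = ((g * γ : SLd d) : Mat d).mulVec (cvec m)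
    rw [← cast_mulVec, ← hc, Matrix.mulVec_mulVec, ← Matrix.SpecialLinearGroup.coe_mul]
  · rintro w ⟨m, rfl⟩
    refine ⟨c'.mulVec m, ?_⟩
    show ((g * γ : SLd d) : Mat d).mulVec (cvec (c'.mulVec m)) = (g : Mat d).mulVec (cvec m)
    rw [← cast_mulVec, ← hc', Matrix.mulVec_mulVec, ← Matrix.SpecialLinearGroup.coe_mul,
      mul_inv_cancel_right]

lemma exists_int_conj {g g' : SLd d} (hl : latticeOf g = latticeOf g') :
    ∃ γ : SLd d, IsIntMat γ ∧ IsIntMat γ⁻¹ ∧ g' = g * γ := by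
  have hcol : ∀ i : Fin d, ∃ m : Fin d → ℤ,
      (g : Mat d).mulVec (cvec m) = fun j => (g' : Mat d) j i := by
    intro i
    have : (fun j => (g' : Mat d) j i) ∈ latticeOf g' := by
      refine ⟨Pi.single i 1, ?_⟩
      have : cvec (Pi.single i (1:ℤ)) = Pi.single i (1:ℝ) := by
        funext l
        rcases eq_or_ne l i with rfl | hne
        · simp [cvec]
        · simp [cvec, Pi.single_apply, hne]
      show (g' : Mat d).mulVec (cvec (Pi.single i 1)) = _
      rw [this, Matrix.mulVec_single]
      funext j; simp
    rw [← hl] at this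
    exact mem_latticeOf.1 this
  have hcol' : ∀ i : Fin d, ∃ m : Fin d → ℤ,
      (g' : Mat d).mulVec (cvec m) = fun j => (g : Mat d) j i := by
    intro i
    have : (fun j => (g : Mat d) j i) ∈ latticeOf g := by
      refine ⟨Pi.single i 1, ?_⟩
      have : cvec (Pi.single i (1:ℤ)) = Pi.single i (1:ℝ) := by
        funext l
        rcases eq_or_ne l i with rfl | hne
        · simp [cvec]
        · simp [cvec, Pi.single_apply, hne]
      show (g : Mat d).mulVec (cvec (Pi.single i 1)) = _
      rw [this, Matrix.mulVec_single]
      funext j; simp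
    rw [hl] at this
    exact mem_latticeOf.1 this
  choose m hm using hcol
  choose m' hm' using hcol'
  set c : Matrix (Fin d) (Fin d) ℤ := Matrix.of fun k i => m i k with hcdef
  set c' : Matrix (Fin d) (Fin d) ℤ := Matrix.of fun k i => m' i k with hc'def
  have hgc : (g : Mat d) * c.map (Int.cast : ℤ → ℝ) = (g' : Mat d) := by
    ext j i
    have := congrFun (hm i) j
    simpa [Matrix.mul_apply, Matrix.mulVec, dotProduct, cvec, Matrix.map_apply,
      hcdef] using this
  have hgc' : (g' : Mat d) * c'.map (Int.cast : ℤ → ℝ) = (g : Mat d) := by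
    ext j i
    have := congrFun (hm' i) j
    simpa [Matrix.mul_apply, Matrix.mulVec, dotProduct, cvec, Matrix.map_apply,
      hc'def] using this
  have hcc' : (c.map (Int.cast : ℤ → ℝ)) * c'.map (Int.cast : ℤ → ℝ) = 1 := by
    have h1 : (g : Mat d) * ((c.map (Int.cast : ℤ → ℝ)) * c'.map (Int.cast : ℤ → ℝ)) =
        (g : Mat d) * 1 := by
      rw [← Matrix.mul_assoc, hgc, hgc', Matrix.mul_one]
    have h2 := congrArg (fun M => (g : Mat d)⁻¹ * M) h1
    simpa [← Matrix.mul_assoc, Matrix.nonsing_inv_mul _ (isUnit_det g)] using h2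
  have hdet : (c.map (Int.cast : ℤ → ℝ)).det = 1 := by
    have h1 : (g' : Mat d).det = (g : Mat d).det * (c.map (Int.cast : ℤ → ℝ)).det := by
      rw [← hgc, Matrix.det_mul]
    rw [Matrix.SpecialLinearGroup.det_coe, Matrix.SpecialLinearGroup.det_coe, one_mul] at h1
    exact h1.symm
  refine ⟨⟨c.map (Int.cast : ℤ → ℝ), hdet⟩, ⟨c, rfl⟩, ?_, ?_⟩
  · refine ⟨c', ?_⟩
    have hadj : (c.map (Int.cast : ℤ → ℝ)).adjugate = c'.map (Int.cast : ℤ → ℝ) := by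
      calc (c.map (Int.cast : ℤ → ℝ)).adjugate
          = (c.map (Int.cast : ℤ → ℝ)).adjugate *
              ((c.map (Int.cast : ℤ → ℝ)) * c'.map (Int.cast : ℤ → ℝ)) := by
            rw [hcc', Matrix.mul_one]
        _ = ((c.map (Int.cast : ℤ → ℝ)).adjugate * (c.map (Int.cast : ℤ → ℝ))) *
              c'.map (Int.cast : ℤ → ℝ) := by rw [Matrix.mul_assoc]
        _ = c'.map (Int.cast : ℤ → ℝ) := by
            rw [Matrix.adjugate_mul, hdet, one_smul, Matrix.one_mul]
    exact (Matrix.SpecialLinearGroup.coe_inv (⟨c.map (Int.cast : ℤ → ℝ), hdet⟩ : SLd d)).trans hadj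
  · apply Subtype.ext
    show (g' : Mat d) = ((g * _ : SLd d) : Mat d)
    exact hgc.symm.trans
      (Matrix.SpecialLinearGroup.coe_mul g (⟨c.map (Int.cast : ℤ → ℝ), hdet⟩ : SLd d)).symm

lemma Ngrid_nonneg (y : Set (Fin d → ℝ)) : 0 ≤ Ngrid y :=
  Real.sInf_nonneg (by rintro r ⟨w, _, rfl⟩; exact abs_nonneg _)

lemma Ngrid_bddBelow (y : Set (Fin d → ℝ)) :
    BddBelow {r : ℝ | ∃ w ∈ y, r = |∏ i, w i|} :=
  ⟨0, by rintro r ⟨w, _, rfl⟩; exact abs_nonneg _⟩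

lemma Ngrid_le {y : Set (Fin d → ℝ)} {w : Fin d → ℝ} (hw : w ∈ y) :
    Ngrid y ≤ |∏ i, w i| :=
  csInf_le (Ngrid_bddBelow y) ⟨w, hw, rfl⟩

lemma prod_mulVec_diag {a : SLd d} (ha : IsDiag a) (z : Fin d → ℝ) :
    ∏ i, (a : Mat d).mulVec z i = ∏ i, z i := by
  have hdiag : (a : Mat d) = Matrix.diagonal (fun i => (a : Mat d) i i) := by
    ext i j
    rcases eq_or_ne i j with rfl | hne
    · simp [Matrix.diagonal_apply_eq]
    · simp [Matrix.diagonal_apply_ne _ hne, ha.2 i j hne]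
  have hmv : ∀ i, (a : Mat d).mulVec z i = (a : Mat d) i i * z i := by
    intro i
    conv_lhs => rw [hdiag]
    rw [Matrix.mulVec_diagonal]
  have hdet : ∏ i, (a : Mat d) i i = 1 := by
    have h2 := a.2
    rw [hdiag, Matrix.det_diagonal] at h2
    exact h2
  calc ∏ i, (a : Mat d).mulVec z i = ∏ i, ((a : Mat d) i i * z i) :=
        Finset.prod_congr rfl fun i _ => hmv i
    _ = (∏ i, (a : Mat d) i i) * ∏ i, z i := by rw [Finset.prod_mul_distrib]
    _ = ∏ i, z i := by rw [hdet, one_mul]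

lemma continuous_coeSLd : Continuous (fun g : SLd d => (g : Mat d)) := continuous_induced_dom

lemma continuous_mul_right (γ : SLd d) : Continuous (fun g : SLd d => g * γ) := by
  apply continuous_induced_rng.2
  show Continuous fun g : SLd d => ((g * γ : SLd d) : Mat d)
  simp only [Matrix.SpecialLinearGroup.coe_mul]
  exact continuous_coeSLd.matrix_mul continuous_const

lemma isOpen_satur (W : Set (SLd d)) (hW : IsOpen W) :
    IsOpen {z : XSp d | ∃ h ∈ W, latticeOfX z = latticeOf h} := by
  have hq : Topology.IsQuotientMap (Quotient.mk' : SLd d → Quotient (latSetoid d)) :=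
    isQuotientMap_quotient_mk'
  rw [show {z : XSp d | ∃ h ∈ W, latticeOfX z = latticeOf h} =
    ({z : Quotient (latSetoid d) | ∃ h ∈ W, latticeOfX z = latticeOf h} : Set (XSp d)) from rfl]
  refine hq.isOpen_preimage.1 ?_
  have hpre : (Quotient.mk' ⁻¹' {z : Quotient (latSetoid d) | ∃ h ∈ W, latticeOfX z = latticeOf h})
      = {g' : SLd d | ∃ h ∈ W, latticeOf g' = latticeOf h} := rfl
  change IsOpen {g' : SLd d | ∃ h ∈ W, latticeOf g' = latticeOf h}
  rw [isOpen_iff_forall_mem_open]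
  rintro g' ⟨hh, hhW, hl⟩
  obtain ⟨γ, hγ, hγi, hEq⟩ := exists_int_conj hl.symm
  refine ⟨(fun g'' : SLd d => g'' * γ⁻¹) ⁻¹' W, ?_, ?_, ?_⟩
  · rintro g'' hg''
    refine ⟨g'' * γ⁻¹, hg'', ?_⟩
    have h2 : g'' = (g'' * γ⁻¹) * γ := by group
    conv_lhs => rw [h2]
    exact latticeOf_mul_int _ γ hγ hγi
  · exact (continuous_mul_right γ⁻¹).isOpen_preimage W hW
  · show g' * γ⁻¹ ∈ W
    rw [hEq, mul_inv_cancel_right]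
    exact hhW

end AuxGL

/-- Inheritance: if `x₀` lies in the closure of the orbit `A_d · x` in `X_d` and `x₀` is GL,
then `x` is GL. -/
theorem stmt_7 (d : ℕ) (hd : 2 ≤ d) (x x0 : XSp d)
    (h : x0 ∈ closure (Aorbit x)) (h0 : IsGL (latticeOfX x0)) :
    IsGL (latticeOfX x) := by
  classical
  obtain ⟨g0, hg0⟩ := Quotient.exists_rep x0
  have hx0lat : latticeOfX x0 = latticeOf g0 := by rw [← hg0]; rfl
  set L := latticeOfX x with hL
  intro v
  have key : ∀ ε : ℝ, 0 < ε → ∃ n : ℤ, n ≠ 0 ∧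
      |(n : ℝ)| * Ngrid (grid L ((n : ℝ) • v)) < ε := by
    intro ε hε
    -- Step A: a sequence of diagonal translates approaching x0
    have hseq : ∀ k : ℕ, ∃ a g1 hh : SLd d, IsDiag a ∧ x = Quotient.mk (latSetoid d) g1 ∧
        (∀ i j, |(hh : AuxGL.Mat d) i j - (g0 : AuxGL.Mat d) i j| < 1/(k+1)) ∧
        latticeOf (a * g1) = latticeOf hh := by
      intro k
      set W : Set (SLd d) :=
        {hh | ∀ i j, |(hh : AuxGL.Mat d) i j - (g0 : AuxGL.Mat d) i j| < 1/(k+1)} with hWdef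
      have hWopen : IsOpen W := by
        have : W = (fun g : SLd d => (g : AuxGL.Mat d)) ⁻¹'
            {M : AuxGL.Mat d | ∀ i j, |M i j - (g0 : AuxGL.Mat d) i j| < 1/(k+1)} := rfl
        rw [this]
        apply AuxGL.continuous_coeSLd.isOpen_preimage
        have : {M : AuxGL.Mat d | ∀ i j, |M i j - (g0 : AuxGL.Mat d) i j| < 1/(k+1)} =
            ⋂ i, ⋂ j, {M : AuxGL.Mat d | |M i j - (g0 : AuxGL.Mat d) i j| < 1/(k+1)} := by
          ext M; simp [Set.mem_iInter]
        rw [this]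
        refine isOpen_iInter_of_finite fun i => isOpen_iInter_of_finite fun j => ?_
        have hcont : Continuous fun M : AuxGL.Mat d => |M i j - (g0 : AuxGL.Mat d) i j| :=
          ((continuous_id.matrix_elem i j).sub continuous_const).abs
        exact isOpen_lt hcont continuous_const
      have hOopen := AuxGL.isOpen_satur W hWopen
      have hx0mem : x0 ∈ {z : XSp d | ∃ hh ∈ W, latticeOfX z = latticeOf hh} := by
        refine ⟨g0, fun i j => ?_, hx0lat⟩
        simp only [sub_self, abs_zero]
        positivity
      obtain ⟨y, hyO, hyorb⟩ := _root_.mem_closure_iff.1 h _ hOopen hx0mem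
      obtain ⟨a, g1, ha, hxg1, hyq⟩ := hyorb
      obtain ⟨hh, hhW, hlat⟩ := hyO
      refine ⟨a, g1, hh, ha, hxg1, hhW, ?_⟩
      rw [hyq] at hlat
      exact hlat
    choose a g1 hf hadiag hxg1 hhclose hlateq using hseq
    -- Step B: reduce the vectors a_k v modulo the lattices, staying in a compact set
    set z : ℕ → (Fin d → ℝ) := fun k => ((a k : AuxGL.Mat d)).mulVec v with hzdef
    set t : ℕ → (Fin d → ℝ) :=
      fun k => (((hf k)⁻¹ : SLd d) : AuxGL.Mat d).mulVec (z k) with htdef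
    set mk : ℕ → (Fin d → ℤ) := fun k i => ⌊t k i⌋ with hmkdef
    set vk : ℕ → (Fin d → ℝ) :=
      fun k => z k - (hf k : AuxGL.Mat d).mulVec (AuxGL.cvec (mk k)) with hvkdef
    have hzk : ∀ k, (hf k : AuxGL.Mat d).mulVec (t k) = z k := by
      intro k
      rw [htdef]
      show (hf k : AuxGL.Mat d).mulVec ((((hf k)⁻¹ : SLd d) : AuxGL.Mat d).mulVec (z k)) = z k
      rw [Matrix.mulVec_mulVec, ← Matrix.SpecialLinearGroup.coe_mul, mul_inv_cancel,
        Matrix.SpecialLinearGroup.coe_one, Matrix.one_mulVec]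
    have hvk_fract : ∀ k, vk k =
        (hf k : AuxGL.Mat d).mulVec (fun i => Int.fract (t k i)) := by
      intro k
      have : (fun i => Int.fract (t k i)) = t k - AuxGL.cvec (mk k) := by
        funext i
        show Int.fract (t k i) = t k i - ((mk k i : ℤ) : ℝ)
        rw [hmkdef]
        exact (Int.self_sub_floor _).symm
      rw [this, Matrix.mulVec_sub, hzk, hvkdef]
    set C : ℝ := (∑ p : Fin d, ∑ q : Fin d, |(g0 : AuxGL.Mat d) p q|) + d with hCdef
    have hCnonneg : (0:ℝ) ≤ C := by
      apply add_nonneg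
      · exact Finset.sum_nonneg fun p _ => Finset.sum_nonneg fun q _ => abs_nonneg _
      · positivity
    have hvk_bound : ∀ k, vk k ∈ Metric.closedBall (0 : Fin d → ℝ) C := by
      intro k
      rw [Metric.mem_closedBall, dist_zero_right]
      rw [pi_norm_le_iff_of_nonneg hCnonneg]
      intro i
      rw [Real.norm_eq_abs, hvk_fract k]
      have h1 : |(hf k : AuxGL.Mat d).mulVec (fun i => Int.fract (t k i)) i|
          ≤ ∑ j, |(hf k : AuxGL.Mat d) i j| * |Int.fract (t k j)| := by
        rw [Matrix.mulVec, dotProduct]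
        calc |∑ j, (hf k : AuxGL.Mat d) i j * Int.fract (t k j)|
            ≤ ∑ j, |(hf k : AuxGL.Mat d) i j * Int.fract (t k j)| :=
              Finset.abs_sum_le_sum_abs _ _
          _ = ∑ j, |(hf k : AuxGL.Mat d) i j| * |Int.fract (t k j)| := by
              refine Finset.sum_congr rfl fun j _ => abs_mul _ _
      refine h1.trans ?_
      have h2 : ∀ j : Fin d, |(hf k : AuxGL.Mat d) i j| * |Int.fract (t k j)|
          ≤ |(g0 : AuxGL.Mat d) i j| + 1 := by
        intro j
        have hb1 : |(hf k : AuxGL.Mat d) i j| ≤ |(g0 : AuxGL.Mat d) i j| + 1 := by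
          have := hhclose k i j
          have h1k : 1/((k:ℝ)+1) ≤ 1 := by
            rw [div_le_one (by positivity)]
            linarith [Nat.cast_nonneg (α := ℝ) k]
          calc |(hf k : AuxGL.Mat d) i j|
              = |(g0 : AuxGL.Mat d) i j + ((hf k : AuxGL.Mat d) i j - (g0 : AuxGL.Mat d) i j)| :=
                by ring_nf
            _ ≤ |(g0 : AuxGL.Mat d) i j| + |(hf k : AuxGL.Mat d) i j - (g0 : AuxGL.Mat d) i j| :=
                abs_add_le _ _
            _ ≤ |(g0 : AuxGL.Mat d) i j| + 1 := by linarith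
        have hb2 : |Int.fract (t k j)| ≤ 1 := by
          rw [abs_of_nonneg (Int.fract_nonneg _)]
          exact le_of_lt (Int.fract_lt_one _)
        calc |(hf k : AuxGL.Mat d) i j| * |Int.fract (t k j)|
            ≤ |(hf k : AuxGL.Mat d) i j| * 1 :=
              mul_le_mul_of_nonneg_left hb2 (abs_nonneg _)
          _ = |(hf k : AuxGL.Mat d) i j| := mul_one _
          _ ≤ |(g0 : AuxGL.Mat d) i j| + 1 := hb1
      calc ∑ j, |(hf k : AuxGL.Mat d) i j| * |Int.fract (t k j)|
          ≤ ∑ j, (|(g0 : AuxGL.Mat d) i j| + 1) := Finset.sum_le_sum fun j _ => h2 j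
        _ = (∑ j, |(g0 : AuxGL.Mat d) i j|) + d := by
            rw [Finset.sum_add_distrib]; simp
        _ ≤ C := by
            rw [hCdef]
            have : (∑ j, |(g0 : AuxGL.Mat d) i j|)
                ≤ ∑ p : Fin d, ∑ q : Fin d, |(g0 : AuxGL.Mat d) p q| := by
              refine Finset.single_le_sum (f := fun p => ∑ q, |(g0 : AuxGL.Mat d) p q|)
                (fun p _ => Finset.sum_nonneg fun q _ => abs_nonneg _) (Finset.mem_univ i)
            linarith
    obtain ⟨v0, -, φ, hφ, hφt⟩ :=
      (isCompact_closedBall (0 : Fin d → ℝ) C).tendsto_subseq hvk_bound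
    -- Step C: use the GL property of x0 at v0
    have hIsL : sInf {r : ℝ | ∃ n : ℤ, n ≠ 0 ∧
        r = |(n : ℝ)| * Ngrid (grid (latticeOf g0) ((n : ℝ) • v0))} = 0 := by
      have := h0 v0
      rw [hx0lat] at this
      exact this
    have hS0ne : {r : ℝ | ∃ n : ℤ, n ≠ 0 ∧
        r = |(n : ℝ)| * Ngrid (grid (latticeOf g0) ((n : ℝ) • v0))}.Nonempty :=
      ⟨_, 1, one_ne_zero, rfl⟩
    have hS0bdd : BddBelow {r : ℝ | ∃ n : ℤ, n ≠ 0 ∧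
        r = |(n : ℝ)| * Ngrid (grid (latticeOf g0) ((n : ℝ) • v0))} := by
      refine ⟨0, ?_⟩
      rintro r ⟨n, hn, rfl⟩
      exact mul_nonneg (abs_nonneg _) (AuxGL.Ngrid_nonneg _)
    have hlt : sInf {r : ℝ | ∃ n : ℤ, n ≠ 0 ∧
        r = |(n : ℝ)| * Ngrid (grid (latticeOf g0) ((n : ℝ) • v0))} < ε/2 := by
      rw [hIsL]; linarith
    obtain ⟨r, ⟨n, hn0, rfl⟩, hrlt⟩ := (csInf_lt_iff hS0bdd hS0ne).1 hlt
    have hnpos : (0:ℝ) < |(n : ℝ)| := by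
      rw [abs_pos]
      exact_mod_cast hn0
    have hNg : Ngrid (grid (latticeOf g0) ((n : ℝ) • v0)) < (ε/2) / |(n : ℝ)| := by
      rw [lt_div_iff₀ hnpos, mul_comm]
      exact hrlt
    have h0g : (0 : Fin d → ℝ) + (n : ℝ) • v0 ∈ grid (latticeOf g0) ((n : ℝ) • v0) :=
      ⟨0, AuxGL.zero_mem g0, rfl⟩
    have hT0ne : {r : ℝ | ∃ w ∈ grid (latticeOf g0) ((n : ℝ) • v0), r = |∏ i, w i|}.Nonempty :=
      ⟨|∏ i, ((0 : Fin d → ℝ) + (n : ℝ) • v0) i|, (0 : Fin d → ℝ) + (n : ℝ) • v0, h0g, rfl⟩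
    obtain ⟨r, ⟨w, hwmem, rfl⟩, hwlt⟩ :=
      (csInf_lt_iff (AuxGL.Ngrid_bddBelow _) hT0ne).1 hNg
    obtain ⟨u0, hu0, rfl⟩ := hwmem
    obtain ⟨m0, hm0⟩ := AuxGL.mem_latticeOf.1 hu0
    -- the limit point
    have hwval : |(n:ℝ)| * |∏ i, (u0 + (n : ℝ) • v0) i| < ε/2 := by
      rw [mul_comm, ← lt_div_iff₀ hnpos]
      exact hwlt
    -- Step D: approximating sequence
    set wseq : ℕ → (Fin d → ℝ) :=
      fun j => (hf (φ j) : AuxGL.Mat d).mulVec (AuxGL.cvec m0) + (n : ℝ) • vk (φ j) with hwsdef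
    have hmat : Filter.Tendsto (fun j => (hf (φ j) : AuxGL.Mat d)) Filter.atTop
        (nhds (g0 : AuxGL.Mat d)) := by
      refine tendsto_pi_nhds.2 ?_
      intro i
      refine tendsto_pi_nhds.2 ?_
      intro jj
      have hsq : Filter.Tendsto
          (fun j => (hf (φ j) : AuxGL.Mat d) i jj - (g0 : AuxGL.Mat d) i jj)
          Filter.atTop (nhds 0) := by
        refine squeeze_zero_norm ?_ tendsto_one_div_add_atTop_nhds_zero_nat
        · intro j
          rw [Real.norm_eq_abs]
          refine le_trans (le_of_lt (hhclose (φ j) i jj)) ?_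
          have h1 : (j:ℝ) + 1 ≤ (φ j : ℝ) + 1 := by
            have h2 : j ≤ φ j := hφ.le_apply
            have h3 : (j:ℝ) ≤ (φ j : ℝ) := by exact_mod_cast h2
            linarith
          exact one_div_le_one_div_of_le (by positivity) h1
      exact tendsto_sub_nhds_zero_iff.1 hsq
    have hcontmv : Continuous fun M : AuxGL.Mat d => M.mulVec (AuxGL.cvec m0) :=
      continuous_id.matrix_mulVec continuous_const
    have hterm1 : Filter.Tendsto
        (fun j => (hf (φ j) : AuxGL.Mat d).mulVec (AuxGL.cvec m0)) Filter.atTop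
        (nhds ((g0 : AuxGL.Mat d).mulVec (AuxGL.cvec m0))) :=
      (hcontmv.tendsto _).comp hmat
    have hterm2 : Filter.Tendsto (fun j => (n : ℝ) • vk (φ j)) Filter.atTop
        (nhds ((n : ℝ) • v0)) := hφt.const_smul _
    have hwlim : Filter.Tendsto wseq Filter.atTop
        (nhds ((g0 : AuxGL.Mat d).mulVec (AuxGL.cvec m0) + (n : ℝ) • v0)) :=
      hterm1.add hterm2
    have hcontN : Continuous fun u : Fin d → ℝ => |(n:ℝ)| * |∏ i, u i| :=
      continuous_const.mul (continuous_finset_prod _ fun i _ => continuous_apply i).abs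
    have hNlim : Filter.Tendsto (fun j => |(n:ℝ)| * |∏ i, wseq j i|) Filter.atTop
        (nhds (|(n:ℝ)| * |∏ i, ((g0 : AuxGL.Mat d).mulVec (AuxGL.cvec m0) + (n : ℝ) • v0) i|)) :=
      (hcontN.tendsto _).comp hwlim
    have hlim_lt : |(n:ℝ)| * |∏ i, ((g0 : AuxGL.Mat d).mulVec (AuxGL.cvec m0) +
        (n : ℝ) • v0) i| < ε := by
      rw [hm0]
      linarith
    obtain ⟨j, hj⟩ := (hNlim.eventually_lt_const hlim_lt).exists
    -- Step E: pull back to the grid of x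
    set k := φ j with hkdef
    have hmemlat : (hf k : AuxGL.Mat d).mulVec (AuxGL.cvec (m0 - n • mk k))
        ∈ latticeOf (a k * g1 k) := by
      rw [hlateq k]
      exact AuxGL.mulVec_mem _ _
    obtain ⟨p, hp⟩ := AuxGL.mem_latticeOf.1 hmemlat
    set u : Fin d → ℝ := (g1 k : AuxGL.Mat d).mulVec (AuxGL.cvec p) with hudef
    have huL : u ∈ L := by
      rw [hL, hxg1 k]
      show u ∈ latticeOf (g1 k)
      exact AuxGL.mulVec_mem _ _
    have hwseq_eq : wseq j = (a k : AuxGL.Mat d).mulVec (u + (n : ℝ) • v) := by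
      have hcv : AuxGL.cvec (m0 - n • mk k) = AuxGL.cvec m0 - (n : ℝ) • AuxGL.cvec (mk k) := by
        funext i
        simp only [AuxGL.cvec, Pi.sub_apply, Pi.smul_apply, smul_eq_mul]
        push_cast
        ring
      have step1 : wseq j = (hf k : AuxGL.Mat d).mulVec (AuxGL.cvec (m0 - n • mk k))
          + (n : ℝ) • z k := by
        rw [hwsdef]
        show (hf k : AuxGL.Mat d).mulVec (AuxGL.cvec m0) + (n : ℝ) • vk k = _
        rw [hcv, Matrix.mulVec_sub, hvkdef]
        show (hf k : AuxGL.Mat d).mulVec (AuxGL.cvec m0) +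
            (n : ℝ) • (z k - (hf k : AuxGL.Mat d).mulVec (AuxGL.cvec (mk k))) = _
        rw [smul_sub, Matrix.mulVec_smul]
        abel
      have hp' : ((a k * g1 k : SLd d) : AuxGL.Mat d).mulVec (AuxGL.cvec p) =
          (hf k : AuxGL.Mat d).mulVec (AuxGL.cvec (m0 - n • mk k)) := hp
      rw [step1, ← hp']
      rw [Matrix.SpecialLinearGroup.coe_mul, ← Matrix.mulVec_mulVec, hzdef]
      show (a k : AuxGL.Mat d).mulVec u + (n : ℝ) • (a k : AuxGL.Mat d).mulVec v = _
      rw [← Matrix.mulVec_smul, ← Matrix.mulVec_add]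
    have hgridmem : u + (n : ℝ) • v ∈ grid L ((n : ℝ) • v) := ⟨u, huL, rfl⟩
    have hNle : Ngrid (grid L ((n : ℝ) • v)) ≤ |∏ i, wseq j i| := by
      have hprod : ∏ i, wseq j i = ∏ i, (u + (n : ℝ) • v) i := by
        rw [hwseq_eq]
        exact AuxGL.prod_mulVec_diag (hadiag k) _
      rw [hprod]
      exact AuxGL.Ngrid_le hgridmem
    refine ⟨n, hn0, lt_of_le_of_lt ?_ hj⟩
    exact mul_le_mul_of_nonneg_left hNle (abs_nonneg _)
  -- conclude that the infimum is zero
  show sInf {r : ℝ | ∃ n : ℤ, n ≠ 0 ∧ r = |(n : ℝ)| * Ngrid (grid L ((n : ℝ) • v))} = 0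
  have hSb : BddBelow {r : ℝ | ∃ n : ℤ, n ≠ 0 ∧
      r = |(n : ℝ)| * Ngrid (grid L ((n : ℝ) • v))} := by
    refine ⟨0, ?_⟩
    rintro r ⟨n, hn, rfl⟩
    exact mul_nonneg (abs_nonneg _) (AuxGL.Ngrid_nonneg _)
  apply le_antisymm
  · by_contra hcon
    push_neg at hcon
    obtain ⟨n, hn0, hnlt⟩ := key _ hcon
    have := csInf_le hSb (Set.mem_setOf.2 ⟨n, hn0, rfl⟩)
    linarith
  · refine Real.sInf_nonneg ?_
    rintro r ⟨n, hn, rfl⟩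
    exact mul_nonneg (abs_nonneg _) (AuxGL.Ngrid_nonneg _)

end
end

section
/- Let y be a grid in ℝ^d. If inf{‖w‖_∞ : a ∈ A_{d+1}^+, w ∈ a·τ_y, w ≠ 0} = 0, i.e., the lattices in the orbit A_{d+1}^+·τ_y contain arbitrarily short nonzero vectors (equivalently, by Mahler's compactness criterion, the orbit A_{d+1}^+·τ_y is unbounded in X_{d+1}), then y is L. -/
open scoped BigOperators

noncomputable section

/-- For the grid `y = x + v`, `τ_y = {(u + tv, t) : u ∈ x, t ∈ ℤ} ⊆ ℝ^{d+1}`. -/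
def tauSet {d : ℕ} (x : Set (Fin d → ℝ)) (v : Fin d → ℝ) : Set (Fin (d + 1) → ℝ) :=
  {w | ∃ u ∈ x, ∃ t : ℤ,
    (∀ i : Fin d, w i.castSucc = u i + (t : ℝ) * v i) ∧ w (Fin.last d) = (t : ℝ)}

/-- `a ∈ A_{d+1}^+`: a diagonal matrix `diag(e^{t_1}, …, e^{t_{d+1}})` with
`t_1, …, t_d > 0` and `t_1 + … + t_{d+1} = 0`. -/
def IsAPlus {d : ℕ} (a : Matrix (Fin (d + 1)) (Fin (d + 1)) ℝ) : Prop :=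
  a.det = 1 ∧ (∀ i j, i ≠ j → a i j = 0) ∧ (∀ i, 0 < a i i) ∧
    ∀ i : Fin (d + 1), (i : ℕ) < d → 1 < a i i

/-- A unimodular lattice is discrete: nonzero vectors have norm bounded below. -/
lemma lattice_discrete {d : ℕ} (g : SLd d) :
    ∃ r0 > 0, ∀ p ∈ latticeOf g, p ≠ 0 → r0 ≤ ‖p‖ := by
  set A : Matrix (Fin d) (Fin d) ℝ := ((g⁻¹ : SLd d) : Matrix (Fin d) (Fin d) ℝ) with hA
  set f : (Fin d → ℝ) →L[ℝ] (Fin d → ℝ) := LinearMap.toContinuousLinearMap A.mulVecLin with hf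
  have hfapp : ∀ w, f w = A.mulVec w := fun w => rfl
  refine ⟨1 / (‖f‖ + 1), by positivity, ?_⟩
  rintro p ⟨m, rfl⟩ hp
  set m' : Fin d → ℝ := fun i => (m i : ℝ) with hm'def
  have hm' : m' ≠ 0 := by
    intro h0
    apply hp
    show (g : Matrix (Fin d) (Fin d) ℝ).mulVec (fun i => (m i : ℝ)) = 0
    rw [show (fun i => ((m i : ℝ))) = m' from rfl, h0, Matrix.mulVec_zero]
  have h1 : (1 : ℝ) ≤ ‖m'‖ := by
    obtain ⟨i, hi⟩ := Function.ne_iff.mp hm'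
    have hmi : m i ≠ 0 := by
      intro h0
      exact hi (by simp [hm'def, h0])
    have : (1 : ℝ) ≤ |(m i : ℝ)| := by
      rw [← Int.cast_abs]
      exact_mod_cast Int.one_le_abs hmi
    calc (1 : ℝ) ≤ |(m i : ℝ)| := this
      _ = ‖m' i‖ := by simp [hm'def, Real.norm_eq_abs]
      _ ≤ ‖m'‖ := norm_le_pi_norm m' i
  have hkey : A.mulVec ((g : Matrix (Fin d) (Fin d) ℝ).mulVec m') = m' := by
    rw [Matrix.mulVec_mulVec]
    have hAg : A * (g : Matrix (Fin d) (Fin d) ℝ) = 1 := by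
      rw [hA, ← Matrix.SpecialLinearGroup.coe_mul, inv_mul_cancel,
        Matrix.SpecialLinearGroup.coe_one]
    rw [hAg, Matrix.one_mulVec]
  have h2 : (1 : ℝ) ≤ (‖f‖ + 1) * ‖(g : Matrix (Fin d) (Fin d) ℝ).mulVec m'‖ := by
    have h3 : ‖m'‖ ≤ ‖f‖ * ‖(g : Matrix (Fin d) (Fin d) ℝ).mulVec m'‖ := by
      calc ‖m'‖ = ‖f ((g : Matrix (Fin d) (Fin d) ℝ).mulVec m')‖ := by rw [hfapp, hkey]
        _ ≤ ‖f‖ * ‖(g : Matrix (Fin d) (Fin d) ℝ).mulVec m'‖ := f.le_opNorm _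
    nlinarith [norm_nonneg ((g : Matrix (Fin d) (Fin d) ℝ).mulVec m'), norm_nonneg f]
  rw [div_le_iff₀ (by positivity)]
  linarith [h2]

/-- If the lattices in the orbit `A_{d+1}^+ · τ_y` contain arbitrarily short nonzero vectors
(in the sup norm), then `y` is L. -/
theorem stmt_8 (d : ℕ) (hd : 2 ≤ d) (g : SLd d) (v : Fin d → ℝ)
    (h : sInf {r : ℝ | ∃ a : Matrix (Fin (d + 1)) (Fin (d + 1)) ℝ, IsAPlus a ∧
        ∃ u ∈ tauSet (latticeOf g) v, a.mulVec u ≠ 0 ∧ r = ‖a.mulVec u‖} = 0) :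
    IsL (latticeOf g) v := by
  classical
  obtain ⟨r0, hr0, hdisc⟩ := lattice_discrete g
  set S : Set ℝ := {r : ℝ | ∃ a : Matrix (Fin (d + 1)) (Fin (d + 1)) ℝ, IsAPlus a ∧
      ∃ u ∈ tauSet (latticeOf g) v, a.mulVec u ≠ 0 ∧ r = ‖a.mulVec u‖} with hSdef
  set T : Set ℝ :=
      {r : ℝ | ∃ n : ℤ, n ≠ 0 ∧ r = |(n : ℝ)| * Ngrid (grid (latticeOf g) ((n : ℝ) • v))}
    with hTdef
  -- S is nonempty
  have hSne : S.Nonempty := by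
    set D0 : Fin (d + 1) → ℝ := fun i => if (i : ℕ) < d then (2 : ℝ) else (2 : ℝ)⁻¹ ^ d
      with hD0
    have hDlast : D0 (Fin.last d) = (2 : ℝ)⁻¹ ^ d := by simp [hD0]
    have hDcs : ∀ j : Fin d, D0 j.castSucc = 2 := by
      intro j; simp [hD0, j.isLt]
    refine ⟨‖(Matrix.diagonal D0).mulVec (Fin.snoc v 1)‖, Matrix.diagonal D0, ?_,
      Fin.snoc v 1, ?_, ?_, rfl⟩
    · refine ⟨?_, ?_, ?_, ?_⟩
      · rw [Matrix.det_diagonal, Fin.prod_univ_castSucc]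
        simp only [hDcs, hDlast, Finset.prod_const, Finset.card_univ, Fintype.card_fin]
        rw [← mul_pow]; norm_num
      · intro i j hij; exact Matrix.diagonal_apply_ne _ hij
      · intro i
        rw [Matrix.diagonal_apply_eq, hD0]
        dsimp only
        split <;> positivity
      · intro i hi
        rw [Matrix.diagonal_apply_eq, hD0]
        simp [hi]
    · refine ⟨0, ⟨0, ?_⟩, 1, ?_, ?_⟩
      · show (g : Matrix (Fin d) (Fin d) ℝ).mulVec (fun i => (((0 : Fin d → ℤ)) i : ℝ)) = 0
        have hz : (fun i : Fin d => (((0 : Fin d → ℤ)) i : ℝ)) = 0 := by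
          funext i; simp
        rw [hz, Matrix.mulVec_zero]
      · intro i; simp [Fin.snoc_castSucc]
      · simp [Fin.snoc_last]
    · intro h0
      have := congrFun h0 (Fin.last d)
      rw [Matrix.mulVec_diagonal, hDlast, Fin.snoc_last] at this
      simp only [Pi.zero_apply, mul_one] at this
      exact pow_ne_zero d (by norm_num : (2 : ℝ)⁻¹ ≠ 0) this
  -- Ngrid is nonneg
  have hNn : ∀ w : Fin d → ℝ, 0 ≤ Ngrid (grid (latticeOf g) w) := by
    intro w
    exact Real.sInf_nonneg (by rintro r ⟨p, _, rfl⟩; exact abs_nonneg _)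
  have hTnonneg : ∀ r ∈ T, 0 ≤ r := by
    rintro r ⟨n, hn, rfl⟩
    exact mul_nonneg (abs_nonneg _) (hNn _)
  -- the key step: T has arbitrarily small elements
  have key : ∀ ε0 > 0, ∃ r ∈ T, r < ε0 := by
    intro ε0 hε0
    set ε : ℝ := min (min ε0 1) r0 / 2 with hεdef
    have hεpos : 0 < ε := by
      have : 0 < min (min ε0 1) r0 := lt_min (lt_min hε0 one_pos) hr0
      positivity
    have hε1 : ε ≤ 1 := by
      have : min (min ε0 1) r0 ≤ 1 := le_trans (min_le_left _ _) (min_le_right _ _)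
      rw [hεdef]; linarith
    have hεr0 : ε < r0 := by
      have : min (min ε0 1) r0 ≤ r0 := min_le_right _ _
      rw [hεdef]; linarith
    have hεε0 : ε < ε0 := by
      have : min (min ε0 1) r0 ≤ ε0 := le_trans (min_le_left _ _) (min_le_left _ _)
      rw [hεdef]; linarith
    obtain ⟨s, hsS, hs⟩ := exists_lt_of_csInf_lt hSne (by rw [hSdef] at h ⊢; rw [h]; exact hεpos)
    obtain ⟨a, ⟨hdet, hoff, hpos, hgt⟩, u, ⟨p, hpx, t, hcoord, hlast⟩, hne0, rfl⟩ := hsS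
    -- a is diagonal
    have hDdiag : a = Matrix.diagonal (fun i => a i i) := by
      ext i j
      by_cases hij : i = j
      · subst hij; simp
      · rw [Matrix.diagonal_apply_ne _ hij]; exact hoff i j hij
    have hprodD : ∏ i, a i i = 1 := by
      rw [hDdiag, Matrix.det_diagonal] at hdet
      exact hdet
    have hcomp : ∀ i, a i i * |u i| < ε := by
      intro i
      have h2 : a.mulVec u i = a i i * u i := by
        conv_lhs => rw [hDdiag]
        exact Matrix.mulVec_diagonal _ _ _
      calc a i i * |u i| = |a i i * u i| := by rw [abs_mul, abs_of_pos (hpos i)]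
        _ = ‖a.mulVec u i‖ := by rw [h2, Real.norm_eq_abs]
        _ ≤ ‖a.mulVec u‖ := norm_le_pi_norm _ i
        _ < ε := hs
    -- t ≠ 0
    have ht : t ≠ 0 := by
      intro ht0
      subst ht0
      simp only [Int.cast_zero, zero_mul, add_zero] at hcoord hlast
      have hpnz : p ≠ 0 := by
        intro hp0
        apply hne0
        have hu0 : u = 0 := by
          funext i
          refine Fin.lastCases ?_ ?_ i
          · rw [hlast]; rfl
          · intro j
            rw [hcoord j, hp0]; rfl
        rw [hu0, Matrix.mulVec_zero]
      have hnorm : ‖p‖ < ε := by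
        rw [pi_norm_lt_iff hεpos]
        intro i
        have hc := hcomp i.castSucc
        have hge : (1 : ℝ) ≤ a i.castSucc i.castSucc := le_of_lt (hgt _ (by simp [i.isLt]))
        rw [Real.norm_eq_abs, ← hcoord i]
        nlinarith [abs_nonneg (u i.castSucc)]
      exact absurd (hdisc p hpx hpnz) (not_le.mpr (lt_trans hnorm hεr0))
    -- main estimate
    have hw'mem : (fun j : Fin d => u j.castSucc) ∈ grid (latticeOf g) ((t : ℝ) • v) := by
      refine ⟨p, hpx, ?_⟩
      funext j
      simp only [Pi.add_apply, Pi.smul_apply, smul_eq_mul]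
      exact (hcoord j).symm
    have hNle : Ngrid (grid (latticeOf g) ((t : ℝ) • v)) ≤ |∏ j : Fin d, u j.castSucc| :=
      csInf_le ⟨0, by rintro r ⟨q, _, rfl⟩; exact abs_nonneg _⟩ ⟨_, hw'mem, rfl⟩
    have hprod : |(t : ℝ)| * |∏ j : Fin d, u j.castSucc| = ∏ i, (a i i * |u i|) := by
      rw [Finset.prod_mul_distrib, hprodD, one_mul, ← Finset.abs_prod,
        Fin.prod_univ_castSucc, hlast, abs_mul, Finset.abs_prod, mul_comm]
    have hple : ∏ i, (a i i * |u i|) ≤ ε ^ (d + 1) := by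
      calc ∏ i, (a i i * |u i|)
          ≤ ∏ _i : Fin (d + 1), ε :=
            Finset.prod_le_prod
              (fun i _ => mul_nonneg (le_of_lt (hpos i)) (abs_nonneg _))
              (fun i _ => le_of_lt (hcomp i))
        _ = ε ^ (d + 1) := by
            rw [Finset.prod_const, Finset.card_univ, Fintype.card_fin]
    have hfinal : |(t : ℝ)| * Ngrid (grid (latticeOf g) ((t : ℝ) • v)) ≤ ε := by
      have h1 : |(t : ℝ)| * Ngrid (grid (latticeOf g) ((t : ℝ) • v))
          ≤ |(t : ℝ)| * |∏ j : Fin d, u j.castSucc| :=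
        mul_le_mul_of_nonneg_left hNle (abs_nonneg _)
      have h2 : ε ^ (d + 1) ≤ ε := pow_le_of_le_one hεpos.le hε1 (Nat.succ_ne_zero d)
      rw [hprod] at h1
      linarith
    exact ⟨_, ⟨t, ht, rfl⟩, lt_of_le_of_lt hfinal hεε0⟩
  -- conclude
  show sInf T = 0
  refine le_antisymm (le_of_forall_pos_le_add ?_) (Real.sInf_nonneg hTnonneg)
  intro ε hε
  obtain ⟨r, hrT, hr⟩ := key ε hε
  have : sInf T ≤ r := csInf_le ⟨0, hTnonneg⟩ hrT
  linarith

end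
end

section
/- For every grid y in ℝ^d, inf{|n|·N(ny) : n ∈ ℤ, n ≠ 0} = inf{|∏_{i=1}^{d+1} w_i| : w = (w_1,…,w_{d+1}) ∈ τ_y, w_{d+1} ≠ 0}. -/
open scoped BigOperators

noncomputable section

/-- For every grid `y = x + v` in `ℝ^d`,
`inf {|n|·N(ny) : n ∈ ℤ, n ≠ 0} = inf {|∏ w_i| : w ∈ τ_y, w_{d+1} ≠ 0}`. -/
theorem stmt_9 (d : ℕ) (hd : 2 ≤ d) (g : SLd d) (v : Fin d → ℝ) :
    sInf {r : ℝ | ∃ n : ℤ, n ≠ 0 ∧ r = |(n : ℝ)| * Ngrid (grid (latticeOf g) ((n : ℝ) • v))}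
      = sInf {r : ℝ | ∃ w ∈ tauSet (latticeOf g) v, w (Fin.last d) ≠ 0 ∧ r = |∏ i, w i|} := by
  set x := latticeOf g with hx
  have hx0 : (0 : Fin d → ℝ) ∈ x := ⟨0, by simp; exact Matrix.mulVec_zero _⟩
  set A := {r : ℝ | ∃ n : ℤ, n ≠ 0 ∧ r = |(n : ℝ)| * Ngrid (grid x ((n : ℝ) • v))} with hA
  set B := {r : ℝ | ∃ w ∈ tauSet x v, w (Fin.last d) ≠ 0 ∧ r = |∏ i, w i|} with hB
  -- forward: elements of grids give elements of B
  have hfwd : ∀ (n : ℤ), n ≠ 0 → ∀ w' ∈ grid x ((n:ℝ) • v),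
      (|(n:ℝ)| * |∏ i, w' i|) ∈ B := by
    rintro n hn w' ⟨u, hu, rfl⟩
    refine ⟨Fin.snoc (u + (n:ℝ) • v) (n:ℝ), ⟨u, hu, n, ?_, ?_⟩, ?_, ?_⟩
    · intro i
      simp [Fin.snoc_castSucc, mul_comm]
    · simp
    · simpa using (Int.cast_ne_zero (α := ℝ)).2 hn
    · rw [Fin.prod_univ_castSucc]
      simp only [Fin.snoc_castSucc, Fin.snoc_last, abs_mul]
      ring
  -- nonemptiness and boundedness
  have hSne : ∀ n : ℤ, {r : ℝ | ∃ w ∈ grid x ((n:ℝ) • v), r = |∏ i, w i|}.Nonempty := by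
    intro n
    exact ⟨_, ⟨(0 : Fin d → ℝ) + (n:ℝ) • v, ⟨0, hx0, rfl⟩, rfl⟩⟩
  have hSbdd : ∀ n : ℤ, BddBelow {r : ℝ | ∃ w ∈ grid x ((n:ℝ) • v), r = |∏ i, w i|} := by
    intro n
    exact ⟨0, by rintro r ⟨w, _, rfl⟩; exact abs_nonneg _⟩
  have hNg : ∀ n : ℤ, 0 ≤ Ngrid (grid x ((n:ℝ) • v)) := by
    intro n
    apply Real.sInf_nonneg
    rintro r ⟨w, _, rfl⟩; exact abs_nonneg _
  have hAne : A.Nonempty := ⟨_, 1, one_ne_zero, rfl⟩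
  have hAbdd : BddBelow A := by
    refine ⟨0, ?_⟩
    rintro r ⟨n, hn, rfl⟩
    exact mul_nonneg (abs_nonneg _) (hNg n)
  have hBne : B.Nonempty := ⟨_, hfwd 1 one_ne_zero _ ((hSne 1).choose_spec.choose_spec.1)⟩
  have hBbdd : BddBelow B := ⟨0, by rintro r ⟨w, _, _, rfl⟩; exact abs_nonneg _⟩
  apply le_antisymm
  · refine le_csInf hBne ?_
    rintro b ⟨w, ⟨u, hu, t, hcast, hlast⟩, hne, rfl⟩
    have ht : t ≠ 0 := by
      intro h; apply hne; rw [hlast, h]; simp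
    have hw' : (fun i => u i + (t:ℝ) * v i) ∈ grid x ((t:ℝ) • v) :=
      ⟨u, hu, by funext i; simp [mul_comm]⟩
    have h1 : Ngrid (grid x ((t:ℝ) • v)) ≤ |∏ i, (u i + (t:ℝ) * v i)| :=
      csInf_le (hSbdd t) ⟨_, hw', rfl⟩
    have h2 : (|(t:ℝ)| * Ngrid (grid x ((t:ℝ) • v))) ∈ A := ⟨t, ht, rfl⟩
    have h3 : sInf A ≤ |(t:ℝ)| * Ngrid (grid x ((t:ℝ) • v)) := csInf_le hAbdd h2
    have h4 : |∏ i, w i| = |(t:ℝ)| * |∏ i, (u i + (t:ℝ) * v i)| := by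
      rw [Fin.prod_univ_castSucc]
      have : ∀ i : Fin d, w i.castSucc = u i + (t:ℝ) * v i := hcast
      rw [Finset.prod_congr rfl (fun i _ => this i), hlast, abs_mul]
      ring
    rw [h4]
    exact h3.trans (mul_le_mul_of_nonneg_left h1 (abs_nonneg _))
  · refine le_csInf hAne ?_
    rintro a ⟨n, hn, rfl⟩
    have hnpos : (0:ℝ) < |(n:ℝ)| := by
      rw [abs_pos]
      exact_mod_cast hn
    rw [show |(n:ℝ)| * Ngrid (grid x ((n:ℝ) • v))
        = Ngrid (grid x ((n:ℝ) • v)) * |(n:ℝ)| from mul_comm _ _, ← div_le_iff₀ hnpos]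
    refine le_csInf (hSne n) ?_
    rintro s ⟨w', hw', rfl⟩
    rw [div_le_iff₀ hnpos]
    have := csInf_le hBbdd (hfwd n hn w' hw')
    linarith [this, mul_comm |(n:ℝ)| |∏ i, w' i|]

end
end

section
/- Let d_1 ≥ 2 and d_2 ≥ 1, let x_1 ⊆ ℝ^{d_1} be a GFL unimodular lattice and let x_2 ⊆ ℝ^{d_2} be any unimodular lattice. Then the direct sum x_1 ⊕ x_2 = {(u, w) : u ∈ x_1, w ∈ x_2} is a GFL unimodular lattice in ℝ^{d_1 + d_2}. -/
open scoped BigOperators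

noncomputable section

/-- The direct sum `x₁ ⊕ x₂ = {(u, w) : u ∈ x₁, w ∈ x₂} ⊆ ℝ^{d₁ + d₂}`. -/
def dsum {d1 d2 : ℕ} (x1 : Set (Fin d1 → ℝ)) (x2 : Set (Fin d2 → ℝ)) :
    Set (Fin (d1 + d2) → ℝ) :=
  {w | ∃ u ∈ x1, ∃ z ∈ x2, w = Fin.append u z}


/-- Splitting `Fin.append` under an identification with sums. -/
private lemma append_eq_elim_comp {d1 d2 : ℕ} {α : Type*} (a : Fin d1 → α) (b : Fin d2 → α) :
    Fin.append a b = Sum.elim a b ∘ finSumFinEquiv.symm := by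
  funext i
  obtain ⟨s, rfl⟩ := finSumFinEquiv.surjective i
  cases s with
  | inl i => simp [Fin.append_left]
  | inr j => simp [Fin.append_right]

private lemma append_add {d1 d2 : ℕ} (a : Fin d1 → ℝ) (b : Fin d2 → ℝ) (c : Fin (d1 + d2) → ℝ) :
    Fin.append a b + c =
      Fin.append (a + fun i => c (Fin.castAdd d2 i)) (b + fun j => c (Fin.natAdd d1 j)) := by
  funext i
  refine Fin.addCases (fun i => ?_) (fun j => ?_) i <;>
    simp [Fin.append_left, Fin.append_right]

private lemma zero_mem_latticeOf {d : ℕ} (g : SLd d) : (0 : Fin d → ℝ) ∈ latticeOf g := by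
  refine ⟨0, ?_⟩
  show (g : Matrix (Fin d) (Fin d) ℝ).mulVec (fun i => (((0 : Fin d → ℤ)) i : ℝ)) = 0
  have : (fun i => (((0 : Fin d → ℤ)) i : ℝ)) = (0 : Fin d → ℝ) := by funext i; simp
  rw [this, Matrix.mulVec_zero]

private lemma prod_append {d1 d2 : ℕ} (a : Fin d1 → ℝ) (b : Fin d2 → ℝ) :
    ∏ i, Fin.append a b i = (∏ i, a i) * ∏ j, b j := by
  rw [Fin.prod_univ_add]
  simp [Fin.append_left, Fin.append_right]

/-- If `x₁ ⊆ ℝ^{d₁}` is a GFL unimodular lattice and `x₂ ⊆ ℝ^{d₂}` is any unimodular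
lattice, then `x₁ ⊕ x₂` is a GFL unimodular lattice in `ℝ^{d₁ + d₂}`. -/
theorem stmt_10 (d1 d2 : ℕ) (hd1 : 2 ≤ d1) (hd2 : 1 ≤ d2)
    (x1 : Set (Fin d1 → ℝ)) (x2 : Set (Fin d2 → ℝ))
    (hx1 : IsUnimodularLattice x1) (hx2 : IsUnimodularLattice x2)
    (h : IsGFL x1) :
    IsUnimodularLattice (dsum x1 x2) ∧ IsGFL (dsum x1 x2) := by
  obtain ⟨g1, rfl⟩ := hx1
  obtain ⟨g2, rfl⟩ := hx2
  -- the block-diagonal matrix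
  set A : Matrix (Fin (d1 + d2)) (Fin (d1 + d2)) ℝ :=
    Matrix.reindex finSumFinEquiv finSumFinEquiv
      (Matrix.fromBlocks (g1 : Matrix (Fin d1) (Fin d1) ℝ) 0 0
        (g2 : Matrix (Fin d2) (Fin d2) ℝ)) with hA
  have hdet : A.det = 1 := by
    rw [hA, Matrix.det_reindex_self, Matrix.det_fromBlocks_zero₂₁,
      g1.det_coe, g2.det_coe, one_mul]
  set g : SLd (d1 + d2) := ⟨A, hdet⟩ with hg
  have hmul : ∀ c : Fin (d1 + d2) → ℝ,
      A.mulVec c = Fin.append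
        ((g1 : Matrix (Fin d1) (Fin d1) ℝ).mulVec (fun i => c (Fin.castAdd d2 i)))
        ((g2 : Matrix (Fin d2) (Fin d2) ℝ).mulVec (fun j => c (Fin.natAdd d1 j))) := by
    intro c
    have hc : c ∘ finSumFinEquiv.symm.symm =
        Sum.elim (fun i => c (Fin.castAdd d2 i)) (fun j => c (Fin.natAdd d1 j)) := by
      funext s
      cases s with
      | inl i => simp
      | inr j => simp
    rw [hA, Matrix.reindex_apply, Matrix.submatrix_mulVec_equiv, hc,
      Matrix.fromBlocks_mulVec]
    simp only [Sum.elim_comp_inl, Sum.elim_comp_inr, Matrix.zero_mulVec, add_zero, zero_add]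
    rw [append_eq_elim_comp]
  have hset : dsum (latticeOf g1) (latticeOf g2) = latticeOf g := by
    ext w
    constructor
    · rintro ⟨u, ⟨m1, rfl⟩, z, ⟨m2, rfl⟩, rfl⟩
      refine ⟨Fin.append m1 m2, ?_⟩
      show A.mulVec _ = _
      rw [hmul]
      simp [Fin.append_left, Fin.append_right]
    · rintro ⟨m, rfl⟩
      refine ⟨_, ⟨fun i => m (Fin.castAdd d2 i), rfl⟩,
        _, ⟨fun j => m (Fin.natAdd d1 j), rfl⟩, ?_⟩
      show A.mulVec _ = _
      rw [hmul]
  constructor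
  · exact ⟨g, hset⟩
  · -- GFL
    intro v
    obtain ⟨n, hn, hN⟩ := h (fun i => v (Fin.castAdd d2 i))
    refine ⟨n, hn, ?_⟩
    set v1 : Fin d1 → ℝ := fun i => v (Fin.castAdd d2 i) with hv1
    set v2 : Fin d2 → ℝ := fun j => v (Fin.natAdd d1 j) with hv2
    set C : ℝ := |∏ j, ((n : ℝ) • v2) j| with hC
    have hC0 : 0 ≤ C := abs_nonneg _
    set S1 : Set ℝ := {r : ℝ | ∃ w ∈ grid (latticeOf g1) ((n : ℝ) • v1), r = |∏ i, w i|}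
      with hS1
    set S : Set ℝ :=
      {r : ℝ | ∃ w ∈ grid (dsum (latticeOf g1) (latticeOf g2)) ((n : ℝ) • v), r = |∏ i, w i|}
      with hS
    have hS1ne : S1.Nonempty := by
      exact ⟨_, ⟨(0 : Fin d1 → ℝ) + (n : ℝ) • v1, ⟨0, zero_mem_latticeOf g1, rfl⟩, rfl⟩⟩
    have hS1nonneg : ∀ r ∈ S1, 0 ≤ r := by
      rintro r ⟨w, _, rfl⟩; exact abs_nonneg _
    -- embed scaled elements of S1 into S
    have hembed : ∀ r ∈ S1, r * C ∈ S := by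
      rintro r ⟨w, ⟨u, hu, rfl⟩, rfl⟩
      refine ⟨Fin.append (u + (n : ℝ) • v1) ((n : ℝ) • v2),
        ⟨Fin.append u 0, ⟨u, hu, 0, zero_mem_latticeOf g2, rfl⟩, ?_⟩, ?_⟩
      · show Fin.append u (0 : Fin d2 → ℝ) + (n : ℝ) • v = _
        rw [append_add]
        funext i
        refine Fin.addCases (fun i => ?_) (fun j => ?_) i <;>
          simp [Fin.append_left, Fin.append_right, hv1, hv2]
      · rw [prod_append, abs_mul]
    have hSne : S.Nonempty := by
      obtain ⟨r, hr⟩ := hS1ne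
      exact ⟨r * C, hembed r hr⟩
    have hSbdd : BddBelow S := by
      refine ⟨0, ?_⟩
      rintro r ⟨w, _, rfl⟩; exact abs_nonneg _
    have hle : Ngrid (grid (dsum (latticeOf g1) (latticeOf g2)) ((n : ℝ) • v)) ≤ 0 := by
      rw [Ngrid, ← hS, Real.sInf_le_iff hSbdd hSne]
      intro ε hε
      have hε' : 0 < ε / (C + 1) := div_pos hε (by linarith)
      obtain ⟨r, hr, hrlt⟩ := Real.lt_sInf_add_pos hS1ne hε'
      have hinf : sInf S1 = 0 := hN
      rw [hinf, zero_add] at hrlt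
      refine ⟨r * C, hembed r hr, ?_⟩
      have hr0 : 0 ≤ r := hS1nonneg r hr
      have : r * C ≤ r * (C + 1) := by nlinarith
      have h2 : r * (C + 1) < ε := by
        rw [lt_div_iff₀ (by linarith : (0:ℝ) < C + 1)] at hrlt
        linarith
      linarith
    have hge : 0 ≤ Ngrid (grid (dsum (latticeOf g1) (latticeOf g2)) ((n : ℝ) • v)) := by
      apply Real.sInf_nonneg
      rintro r ⟨w, _, rfl⟩; exact abs_nonneg _
    linarith

end
end

section
/- Let x_1, x_2 be unimodular lattices in ℝ^d such that x_1 is GFL and there exists c > 0 with c·x_1 commensurable with x_2 (i.e., c·x_1 ∩ x_2 has finite index in both c·x_1 and x_2). Then x_2 is GFL. -/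
open scoped BigOperators

noncomputable section

/-- `latticeOf g` as an additive subgroup. -/
def latAdd {d : ℕ} (g : SLd d) : AddSubgroup (Fin d → ℝ) where
  carrier := latticeOf g
  zero_mem' := by
    refine ⟨0, ?_⟩
    show (g : Matrix (Fin d) (Fin d) ℝ).mulVec (fun i => (((0 : Fin d → ℤ)) i : ℝ)) = 0
    have h : (fun i => (((0 : Fin d → ℤ)) i : ℝ)) = (0 : Fin d → ℝ) := by funext i; simp
    rw [h, Matrix.mulVec_zero]
  add_mem' := by
    rintro a b ⟨ma, rfl⟩ ⟨mb, rfl⟩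
    refine ⟨ma + mb, ?_⟩
    show (g : Matrix (Fin d) (Fin d) ℝ).mulVec (fun i => (((ma + mb)) i : ℝ))
        = (g : Matrix (Fin d) (Fin d) ℝ).mulVec (fun i => (ma i : ℝ))
          + (g : Matrix (Fin d) (Fin d) ℝ).mulVec (fun i => (mb i : ℝ))
    have h : (fun i => (((ma + mb)) i : ℝ))
        = (fun i => (ma i : ℝ)) + fun i => (mb i : ℝ) := by
      funext i; push_cast [Pi.add_apply]; rfl
    rw [h, Matrix.mulVec_add]
  neg_mem' := by
    rintro a ⟨ma, rfl⟩
    refine ⟨-ma, ?_⟩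
    show (g : Matrix (Fin d) (Fin d) ℝ).mulVec (fun i => (((-ma)) i : ℝ))
        = -(g : Matrix (Fin d) (Fin d) ℝ).mulVec (fun i => (ma i : ℝ))
    have h : (fun i => (((-ma)) i : ℝ)) = -fun i => (ma i : ℝ) := by
      funext i; simp
    rw [h, Matrix.mulVec_neg]

theorem sInf_zero_of (S : Set ℝ) (h0 : ∀ r ∈ S, 0 ≤ r)
    (h : ∀ ε : ℝ, 0 < ε → ∃ r ∈ S, r < ε) : sInf S = 0 := by
  have hne : S.Nonempty := by obtain ⟨r, hr, _⟩ := h 1 one_pos; exact ⟨r, hr⟩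
  refine le_antisymm ?_ (le_csInf hne h0)
  by_contra hlt
  push_neg at hlt
  obtain ⟨r, hr, hrlt⟩ := h _ hlt
  exact absurd (csInf_le ⟨0, h0⟩ hr) (not_le.mpr hrlt)

/-- If `x₁` is GFL and `c·x₁` is commensurable with `x₂` for some `c > 0` (the intersection
`c·x₁ ∩ x₂` has finite index in both, i.e. finitely many of its translates cover each),
then `x₂` is GFL. -/
theorem stmt_11 (d : ℕ) (hd : 2 ≤ d) (x1 x2 : Set (Fin d → ℝ))
    (hx1 : IsUnimodularLattice x1) (hx2 : IsUnimodularLattice x2)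
    (h1 : IsGFL x1) (c : ℝ) (hc : 0 < c)
    (hcomm : ∃ F1 F2 : Finset (Fin d → ℝ),
      (∀ w ∈ (fun u => c • u) '' x1, ∃ f ∈ F1, w - f ∈ ((fun u => c • u) '' x1) ∩ x2) ∧
      (∀ w ∈ x2, ∃ f ∈ F2, w - f ∈ ((fun u => c • u) '' x1) ∩ x2)) :
    IsGFL x2 := by
  obtain ⟨g1, hg1⟩ := hx1
  obtain ⟨g2, hg2⟩ := hx2
  obtain ⟨F1, F2, hF1, -⟩ := hcomm
  set H1' : AddSubgroup (Fin d → ℝ) :=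
    (latAdd g1).map (DistribMulAction.toAddMonoidHom (Fin d → ℝ) c) with hH1'
  have hcx1 : ((fun u => c • u) '' x1) = (H1' : Set (Fin d → ℝ)) := by
    rw [hg1, hH1', AddSubgroup.coe_map]
    rfl
  set K : AddSubgroup (Fin d → ℝ) := H1' ⊓ latAdd g2 with hK
  have hKset : (((fun u => c • u) '' x1) ∩ x2) = (K : Set (Fin d → ℝ)) := by
    rw [hcx1, hg2, hK, AddSubgroup.coe_inf]
    rfl
  set m := F1.card.factorial with hm
  have hmpos : 0 < m := Nat.factorial_pos _
  -- key finite-index claim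
  have key : ∀ w ∈ H1', m • w ∈ K := by
    intro w hw
    have hch : ∀ i : ℕ, ∃ f ∈ F1, (i • w) - f ∈ (((fun u => c • u) '' x1) ∩ x2) := by
      intro i
      refine hF1 (i • w) ?_
      rw [hcx1]
      exact AddSubgroup.nsmul_mem H1' hw i
    choose f hfF hfmem using hch
    obtain ⟨i, hi, j, hj, hij, hfij⟩ :=
      Finset.exists_ne_map_eq_of_card_lt_of_maps_to (s := Finset.range (F1.card + 1))
        (t := F1) (by simp) (fun i _ => hfF i)
    have hfK : ∀ i : ℕ, i • w - f i ∈ K := by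
      intro i
      have := hfmem i
      rw [hKset] at this
      exact this
    clear hfmem
    wlog hlt : j < i generalizing i j
    · exact this j hj i hi (Ne.symm hij) hfij.symm ((hij.lt_or_gt).resolve_right hlt)
    have hsub : (i - j) • w ∈ K := by
      have hKm := K.sub_mem (hfK i) (hfK j)
      rw [hfij] at hKm
      have heq : (i • w - f j) - (j • w - f j) = (i - j) • w := by
        have h2 : (i - j) • w + j • w = i • w := by
          rw [← add_nsmul, Nat.sub_add_cancel hlt.le]
        rw [← h2]; abel
      rwa [heq] at hKm
    obtain ⟨q, hq⟩ : (i - j) ∣ m := by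
      rw [hm]
      refine Nat.dvd_factorial (Nat.sub_pos_of_lt hlt) ?_
      have : i ≤ F1.card := Nat.lt_succ_iff.mp (Finset.mem_range.mp hi)
      omega
    rw [hq, mul_comm, mul_smul]
    exact AddSubgroup.nsmul_mem K hsub q
  -- main argument
  intro v
  obtain ⟨n1, hn1, hN1⟩ := h1 (c⁻¹ • v)
  refine ⟨(m : ℤ) * n1, mul_ne_zero (Int.natCast_ne_zero.mpr hmpos.ne') hn1, ?_⟩
  unfold Ngrid at hN1 ⊢
  have hmR : (0 : ℝ) < (m : ℝ) := by exact_mod_cast hmpos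
  have hC : (0 : ℝ) < ((m : ℝ) * c) ^ d := pow_pos (mul_pos hmR hc) d
  apply sInf_zero_of
  · rintro r ⟨w, -, rfl⟩; exact abs_nonneg _
  · intro ε hε
    have hne : {r : ℝ | ∃ w ∈ grid x1 ((n1 : ℝ) • (c⁻¹ • v)), r = |∏ i, w i|}.Nonempty := by
      refine ⟨|∏ i, ((0 : Fin d → ℝ) + (n1 : ℝ) • (c⁻¹ • v)) i|, ⟨_, ⟨0, ?_, rfl⟩, rfl⟩⟩
      rw [hg1]
      exact (latAdd g1).zero_mem
    have hlt' : sInf {r : ℝ | ∃ w ∈ grid x1 ((n1 : ℝ) • (c⁻¹ • v)), r = |∏ i, w i|}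
        < ε / (((m : ℝ) * c) ^ d) := by
      rw [hN1]; exact div_pos hε hC
    obtain ⟨r, ⟨w, hwgrid, rfl⟩, hrlt⟩ := exists_lt_of_csInf_lt hne hlt'
    obtain ⟨u, hu, rfl⟩ := hwgrid
    -- the witness
    set W : Fin d → ℝ := ((m : ℝ) * c) • (u + (n1 : ℝ) • (c⁻¹ • v)) with hW
    have hzmem : m • (c • u) ∈ K := by
      apply key
      rw [← SetLike.mem_coe, ← hcx1]
      exact ⟨u, hu, rfl⟩
    have hzx2 : m • (c • u) ∈ x2 := by
      rw [hg2]
      exact (hzmem.2 : _)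
    have hWeq : W = m • (c • u) + (((m : ℤ) * n1 : ℤ) : ℝ) • v := by
      rw [hW, smul_add]
      congr 1
      · rw [← Nat.cast_smul_eq_nsmul ℝ m (c • u), smul_smul]
      · rw [smul_smul, smul_smul]
        congr 1
        push_cast
        field_simp
    have hWmem : W ∈ grid x2 ((((m : ℤ) * n1 : ℤ) : ℝ) • v) := by
      exact ⟨m • (c • u), hzx2, hWeq.symm⟩
    refine ⟨|∏ i, W i|, ⟨W, hWmem, rfl⟩, ?_⟩
    have hprod : |∏ i, W i| = (((m : ℝ) * c) ^ d) * |∏ i, (u + (n1 : ℝ) • (c⁻¹ • v)) i| := by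
      have : ∏ i, W i = (((m : ℝ) * c) ^ d) * ∏ i, (u + (n1 : ℝ) • (c⁻¹ • v)) i := by
        rw [hW]
        simp only [Pi.smul_apply, smul_eq_mul]
        rw [Finset.prod_mul_distrib, Finset.prod_const, Finset.card_univ, Fintype.card_fin]
      rw [this, abs_mul, abs_of_pos hC]
    rw [hprod]
    calc (((m : ℝ) * c) ^ d) * |∏ i, (u + (n1 : ℝ) • (c⁻¹ • v)) i|
        < (((m : ℝ) * c) ^ d) * (ε / (((m : ℝ) * c) ^ d)) :=
          mul_lt_mul_of_pos_left hrlt hC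
      _ = ε := by field_simp

end
end

section
/- Let x ∈ X_d and let A_{d,x} = {a ∈ A_d : ax = x} be the stabilizer of x in A_d, acting on the torus ℝ^d/x. Suppose that for every v ∈ ℝ^d the closure in ℝ^d/x of the A_{d,x}-orbit of v + x contains a point u + x such that the grid x + u is FL. Then x is GFL. In particular, if for every v ∈ ℝ^d this orbit closure contains a rational point (a point w + x with w in the ℚ-span of x), then x is GFL. -/
open scoped BigOperators

noncomputable section

/-- The preimage in `ℝ^d` of the orbit of the point `v + x` of the torus `ℝ^d/x` under the
stabilizer `A_{d,x} = {a ∈ A_d : ax = x}` (acting on `ℝ^d/x` by automorphisms); a point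
`u + x` of the torus lies in the closure of this orbit iff `u` lies in the closure in `ℝ^d`
of this set. -/
def stabOrbitSat {d : ℕ} (g : SLd d) (v : Fin d → ℝ) : Set (Fin d → ℝ) :=
  {z | ∃ a : SLd d, IsDiag a ∧
      (fun w => (a : Matrix (Fin d) (Fin d) ℝ).mulVec w) '' latticeOf g = latticeOf g ∧
      ∃ w ∈ latticeOf g, z = (a : Matrix (Fin d) (Fin d) ℝ).mulVec v + w}


section AuxLemmas
variable {d : ℕ}

lemma zero_mem_lattice (g : SLd d) : (0 : Fin d → ℝ) ∈ latticeOf g := by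
  refine ⟨0, ?_⟩
  dsimp only
  have : (fun i : Fin d => ((0 : Fin d → ℤ) i : ℝ)) = 0 := by funext i; simp
  rw [this, Matrix.mulVec_zero]

lemma add_mem_lattice {g : SLd d} {w₁ w₂ : Fin d → ℝ}
    (h1 : w₁ ∈ latticeOf g) (h2 : w₂ ∈ latticeOf g) : w₁ + w₂ ∈ latticeOf g := by
  obtain ⟨m1, rfl⟩ := h1; obtain ⟨m2, rfl⟩ := h2
  refine ⟨m1 + m2, ?_⟩
  dsimp only
  have : (fun i => ((m1 + m2) i : ℝ)) = (fun i => (m1 i : ℝ)) + fun i => (m2 i : ℝ) := by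
    funext i; simp [Pi.add_apply]
  rw [this, Matrix.mulVec_add]

lemma zsmul_mem_lattice {g : SLd d} (n : ℤ) {w : Fin d → ℝ}
    (h : w ∈ latticeOf g) : (n : ℝ) • w ∈ latticeOf g := by
  obtain ⟨m, rfl⟩ := h
  refine ⟨n • m, ?_⟩
  dsimp only
  have : (fun i => ((n • m) i : ℝ)) = (n : ℝ) • fun i => (m i : ℝ) := by
    funext i; simp
  rw [this, Matrix.mulVec_smul]

lemma neg_mem_lattice {g : SLd d} {w : Fin d → ℝ}
    (h : w ∈ latticeOf g) : -w ∈ latticeOf g := by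
  have := zsmul_mem_lattice (-1) h
  simpa using this

/-- The value set defining `Ngrid`. -/
def Nset {d : ℕ} (y : Set (Fin d → ℝ)) : Set ℝ := {r : ℝ | ∃ w ∈ y, r = |∏ i, w i|}

lemma Nset_nonneg {y : Set (Fin d → ℝ)} {r : ℝ} (hr : r ∈ Nset y) : 0 ≤ r := by
  obtain ⟨w, _, rfl⟩ := hr; exact abs_nonneg _

lemma Nset_bddBelow (y : Set (Fin d → ℝ)) : BddBelow (Nset y) :=
  ⟨0, fun r hr => Nset_nonneg hr⟩

lemma Nset_grid_nonempty (g : SLd d) (v : Fin d → ℝ) :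
    (Nset (grid (latticeOf g) v)).Nonempty :=
  ⟨|∏ i, ((0 : Fin d → ℝ) + v) i|, ⟨(0 : Fin d → ℝ) + v, ⟨0, zero_mem_lattice g, rfl⟩, rfl⟩⟩

lemma Ngrid_nonneg (g : SLd d) (v : Fin d → ℝ) : 0 ≤ Ngrid (grid (latticeOf g) v) :=
  le_csInf (Nset_grid_nonempty g v) fun r hr => Nset_nonneg hr

/-- translation by a lattice element does not change the grid -/
lemma grid_add_lattice (g : SLd d) (t : Fin d → ℝ) {w : Fin d → ℝ} (hw : w ∈ latticeOf g) :
    grid (latticeOf g) (t + w) = grid (latticeOf g) t := by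
  ext z
  constructor
  · rintro ⟨u, hu, rfl⟩
    exact ⟨u + w, add_mem_lattice hu hw, by abel⟩
  · rintro ⟨u, hu, rfl⟩
    exact ⟨u + -w, add_mem_lattice hu (neg_mem_lattice hw), by abel⟩

lemma prod_mulVec_diag {a : SLd d} (ha : IsDiag a) (w : Fin d → ℝ) :
    ∏ i, (a : Matrix (Fin d) (Fin d) ℝ).mulVec w i = ∏ i, w i := by
  have hdiag : (a : Matrix (Fin d) (Fin d) ℝ) = Matrix.diagonal
      (fun i => (a : Matrix (Fin d) (Fin d) ℝ) i i) := by
    ext i j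
    by_cases h : i = j
    · subst h; simp [Matrix.diagonal]
    · simp [Matrix.diagonal_apply_ne _ h, ha.2 i j h]
  have hprod : ∏ i, (a : Matrix (Fin d) (Fin d) ℝ) i i = 1 := by
    have hdet := a.2
    rw [hdiag] at hdet
    simpa [Matrix.det_diagonal] using hdet
  have hmv : ∀ i, (a : Matrix (Fin d) (Fin d) ℝ).mulVec w i
      = (a : Matrix (Fin d) (Fin d) ℝ) i i * w i := by
    intro i
    rw [Matrix.mulVec, dotProduct]
    exact Finset.sum_eq_single i (fun j _ hj => by rw [ha.2 i j (Ne.symm hj), zero_mul])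
      (by simp)
  calc ∏ i, (a : Matrix (Fin d) (Fin d) ℝ).mulVec w i
      = ∏ i, ((a : Matrix (Fin d) (Fin d) ℝ) i i * w i) := by
        exact Finset.prod_congr rfl fun i _ => hmv i
    _ = (∏ i, (a : Matrix (Fin d) (Fin d) ℝ) i i) * ∏ i, w i := Finset.prod_mul_distrib
    _ = ∏ i, w i := by rw [hprod, one_mul]

/-- Ngrid is invariant along the orbit. -/
lemma Ngrid_orbit_const (g : SLd d) (v : Fin d → ℝ) {z : Fin d → ℝ}
    (hz : z ∈ stabOrbitSat g v) :
    Ngrid (grid (latticeOf g) z) = Ngrid (grid (latticeOf g) v) := by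
  obtain ⟨a, ha, hstab, w, hw, rfl⟩ := hz
  rw [grid_add_lattice g _ hw]
  have hsets : Nset (grid (latticeOf g) ((a : Matrix (Fin d) (Fin d) ℝ).mulVec v))
      = Nset (grid (latticeOf g) v) := by
    ext r
    constructor
    · rintro ⟨-, ⟨u, hu, rfl⟩, rfl⟩
      rw [← hstab] at hu
      obtain ⟨u', hu', rfl⟩ := hu
      refine ⟨u' + v, ⟨u', hu', rfl⟩, ?_⟩
      dsimp only
      have : (a : Matrix (Fin d) (Fin d) ℝ).mulVec u' + (a : Matrix (Fin d) (Fin d) ℝ).mulVec v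
          = (a : Matrix (Fin d) (Fin d) ℝ).mulVec (u' + v) := by
        rw [Matrix.mulVec_add]
      rw [this, prod_mulVec_diag ha]
    · rintro ⟨-, ⟨u, hu, rfl⟩, rfl⟩
      have hau : (a : Matrix (Fin d) (Fin d) ℝ).mulVec u ∈ latticeOf g := by
        rw [← hstab]; exact ⟨u, hu, rfl⟩
      refine ⟨(a : Matrix (Fin d) (Fin d) ℝ).mulVec u + (a : Matrix (Fin d) (Fin d) ℝ).mulVec v,
        ⟨_, hau, rfl⟩, ?_⟩
      dsimp only
      rw [← Matrix.mulVec_add, prod_mulVec_diag ha]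
  show sInf (Nset _) = sInf (Nset _)
  rw [hsets]

lemma smul_mem_stabOrbitSat (g : SLd d) (n : ℤ) {v z : Fin d → ℝ}
    (hz : z ∈ stabOrbitSat g v) : (n : ℝ) • z ∈ stabOrbitSat g ((n : ℝ) • v) := by
  obtain ⟨a, ha, hstab, w, hw, rfl⟩ := hz
  refine ⟨a, ha, hstab, (n : ℝ) • w, zsmul_mem_lattice n hw, ?_⟩
  rw [smul_add, Matrix.mulVec_smul]

/-- Main lemma: FL point in the orbit closure forces FL. -/
lemma isFL_of_closure (g : SLd d) (v u : Fin d → ℝ)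
    (hu : u ∈ closure (stabOrbitSat g v)) (hFL : IsFL (latticeOf g) u) :
    IsFL (latticeOf g) v := by
  obtain ⟨n, hn, hN⟩ := hFL
  refine ⟨n, hn, ?_⟩
  set S := stabOrbitSat g ((n : ℝ) • v) with hS
  have hcl : (n : ℝ) • u ∈ closure S := by
    have hc : Continuous fun z : Fin d → ℝ => (n : ℝ) • z := continuous_const_smul _
    exact map_mem_closure hc hu fun z hz => smul_mem_stabOrbitSat g n hz
  have hnonneg := Ngrid_nonneg g ((n : ℝ) • v)
  have hle : ∀ ε > (0 : ℝ), Ngrid (grid (latticeOf g) ((n : ℝ) • v)) ≤ 0 + ε := by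
    intro ε hε
    rw [zero_add]
    -- pick an element of the grid of n•u with small product
    have hlt : sInf (Nset (grid (latticeOf g) ((n : ℝ) • u))) < ε := by
      have : sInf (Nset (grid (latticeOf g) ((n : ℝ) • u)))
          = Ngrid (grid (latticeOf g) ((n : ℝ) • u)) := rfl
      rw [this, hN]; exact hε
    obtain ⟨r, hrmem, hrlt⟩ := exists_lt_of_csInf_lt (Nset_grid_nonempty g _) hlt
    obtain ⟨w', ⟨w, hw, rfl⟩, rfl⟩ := hrmem
    dsimp only at hrlt
    -- continuity argument
    have hfc : Continuous fun z : Fin d → ℝ => |∏ i, (w + z) i| := by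
      apply continuous_abs.comp
      apply continuous_finset_prod
      intro i _
      exact continuous_const.add (continuous_apply i)
    have hopen : IsOpen {z : Fin d → ℝ | |∏ i, (w + z) i| < ε} :=
      isOpen_lt hfc continuous_const
    have hmemopen : (n : ℝ) • u ∈ {z : Fin d → ℝ | |∏ i, (w + z) i| < ε} := hrlt
    obtain ⟨z, hzopen, hzS⟩ := mem_closure_iff.mp hcl _ hopen hmemopen
    have heq := Ngrid_orbit_const g ((n : ℝ) • v) hzS
    rw [← heq]
    have hmem : |∏ i, (w + z) i| ∈ Nset (grid (latticeOf g) z) :=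
      ⟨w + z, ⟨w, hw, rfl⟩, rfl⟩
    exact le_of_lt (lt_of_le_of_lt (csInf_le (Nset_bddBelow _) hmem) hzopen)
  have := le_of_forall_pos_le_add hle
  linarith


lemma ratcast_smul_eq (k : ℤ) (w : Fin d → ℝ) : (k : ℚ) • w = (k : ℝ) • w := by
  rw [Int.cast_smul_eq_zsmul, Int.cast_smul_eq_zsmul]

/-- A rational point has an integer multiple in the lattice. -/
lemma rational_int_multiple (g : SLd d) {u : Fin d → ℝ}
    (hu : u ∈ Submodule.span ℚ (latticeOf g)) :
    ∃ N : ℤ, N ≠ 0 ∧ (N : ℝ) • u ∈ latticeOf g := by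
  have key : ∃ N : ℤ, N ≠ 0 ∧ (N : ℚ) • u ∈ latticeOf g := by
    refine Submodule.span_induction
      (p := fun x _ => ∃ N : ℤ, N ≠ 0 ∧ (N : ℚ) • x ∈ latticeOf g) ?_ ?_ ?_ ?_ hu
    · intro w hw
      exact ⟨1, one_ne_zero, by simpa using hw⟩
    · exact ⟨1, one_ne_zero, by simpa using zero_mem_lattice g⟩
    · rintro x y - - ⟨N1, hN1, hx⟩ ⟨N2, hN2, hy⟩
      refine ⟨N1 * N2, mul_ne_zero hN1 hN2, ?_⟩
      have : ((N1 * N2 : ℤ) : ℚ) • (x + y)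
          = (N2 : ℚ) • ((N1 : ℚ) • x) + (N1 : ℚ) • ((N2 : ℚ) • y) := by
        rw [smul_add, smul_smul, smul_smul]
        push_cast
        rw [mul_comm (N2:ℚ) (N1:ℚ)]
      rw [this]
      have h1 : (N2 : ℚ) • ((N1 : ℚ) • x) ∈ latticeOf g := by
        rw [ratcast_smul_eq]; exact zsmul_mem_lattice N2 hx
      have h2 : (N1 : ℚ) • ((N2 : ℚ) • y) ∈ latticeOf g := by
        rw [ratcast_smul_eq]; exact zsmul_mem_lattice N1 hy
      exact add_mem_lattice h1 h2
    · rintro q x - ⟨N, hN, hx⟩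
      refine ⟨(q.den : ℤ) * N, mul_ne_zero (by exact_mod_cast q.den_nz) hN, ?_⟩
      have hq : ((q.den : ℚ)) * q = (q.num : ℚ) := by
        rw [mul_comm, Rat.mul_den_eq_num]
      have : (((q.den : ℤ) * N : ℤ) : ℚ) • (q • x) = (q.num : ℚ) • ((N : ℚ) • x) := by
        rw [smul_smul, smul_smul]
        push_cast
        ring_nf
        rw [show (q.den : ℚ) * N * q = ((q.den : ℚ) * q) * N by ring, hq]
        ring_nf
      rw [this, ratcast_smul_eq]
      exact zsmul_mem_lattice q.num hx
  obtain ⟨N, hN, hmem⟩ := key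
  refine ⟨N, hN, ?_⟩
  rwa [← ratcast_smul_eq]

/-- A point with an integer multiple in the lattice is FL. -/
lemma isFL_of_int_multiple (hd : 0 < d) (g : SLd d) {u : Fin d → ℝ}
    (h : ∃ N : ℤ, N ≠ 0 ∧ (N : ℝ) • u ∈ latticeOf g) : IsFL (latticeOf g) u := by
  obtain ⟨N, hN, hmem⟩ := h
  refine ⟨N, hN, ?_⟩
  have h0 : (0 : ℝ) ∈ Nset (grid (latticeOf g) ((N : ℝ) • u)) := by
    refine ⟨-((N : ℝ) • u) + (N : ℝ) • u, ⟨-((N : ℝ) • u), neg_mem_lattice hmem, rfl⟩, ?_⟩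
    have : -((N : ℝ) • u) + (N : ℝ) • u = 0 := by abel
    rw [this]
    have : ∏ i, (0 : Fin d → ℝ) i = 0 :=
      Finset.prod_eq_zero (Finset.mem_univ (⟨0, hd⟩ : Fin d)) rfl
    rw [this, abs_zero]
  refine le_antisymm (csInf_le (Nset_bddBelow _) h0) (Ngrid_nonneg g _)

end AuxLemmas

/-- If for every `v ∈ ℝ^d` the closure in the torus `ℝ^d/x` of the `A_{d,x}`-orbit of
`v + x` contains a point `u + x` with `x + u` FL, then `x` is GFL. In particular, if every
such orbit closure contains a rational point (a point `u + x` with `u` in the ℚ-span of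
`x`), then `x` is GFL. -/
theorem stmt_13 (d : ℕ) (hd : 2 ≤ d) (g : SLd d) :
    ((∀ v : Fin d → ℝ, ∃ u : Fin d → ℝ,
        u ∈ closure (stabOrbitSat g v) ∧ IsFL (latticeOf g) u) →
      IsGFL (latticeOf g)) ∧
    ((∀ v : Fin d → ℝ, ∃ u : Fin d → ℝ,
        u ∈ closure (stabOrbitSat g v) ∧ u ∈ Submodule.span ℚ (latticeOf g)) →
      IsGFL (latticeOf g)) := by
  constructor
  · intro h v
    obtain ⟨u, hcl, hFL⟩ := h v
    exact isFL_of_closure g v u hcl hFL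
  · intro h v
    obtain ⟨u, hcl, hspan⟩ := h v
    exact isFL_of_closure g v u hcl
      (isFL_of_int_multiple (by omega) g (rational_int_multiple g hspan))

end
end

section
/- Let K be a totally real number field of degree d ≥ 2. Then there exists a unit α ∈ O_K^× such that for every positive integer n, ℚ(α^n) = K; equivalently, the minimal polynomial of α^n over ℚ has degree d for every n ≥ 1. -/
open scoped BigOperators

open NumberField NumberField.Units NumberField.InfinitePlace

set_option maxSynthPendingDepth 2

noncomputable section

namespace Stmt18Aux

variable {K : Type*} [Field K] [NumberField K]

/-- Coordinates of a unit modulo torsion, as rational numbers. -/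
def phi (K : Type*) [Field K] [NumberField K] (u : (𝓞 K)ˣ) : Fin (rank K) → ℚ :=
  fun i => ((basisModTorsion K).repr (Additive.ofMul (QuotientGroup.mk u)) i : ℚ)

lemma phi_mul (u v : (𝓞 K)ˣ) : phi K (u * v) = phi K u + phi K v := by
  funext i
  simp [phi, QuotientGroup.mk_mul, ofMul_mul, map_add]

lemma phi_zpow (u : (𝓞 K)ˣ) (m : ℤ) : phi K (u ^ m) = m • phi K u := by
  funext i
  simp [phi, QuotientGroup.mk_zpow, ofMul_zpow, map_zsmul, smul_eq_mul]

lemma phi_pow (u : (𝓞 K)ˣ) (n : ℕ) : phi K (u ^ n) = (n : ℚ) • phi K u := by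
  have := phi_zpow u (n : ℤ)
  rw [zpow_natCast] at this
  funext i
  rw [this]
  simp [smul_eq_mul]

lemma phi_torsion {u : (𝓞 K)ˣ} (hu : u ∈ torsion K) : phi K u = 0 := by
  funext i
  simp [phi, (QuotientGroup.eq_one_iff u).mpr hu]

/-- `phi` as an additive monoid hom. -/
def phiHom : Additive (𝓞 K)ˣ →+ (Fin (rank K) → ℚ) :=
  AddMonoidHom.mk' (fun u => phi K u.toMul) (fun a b => phi_mul a.toMul b.toMul)

lemma phi_prod {ι : Type*} (s : Finset ι) (f : ι → (𝓞 K)ˣ) :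
    phi K (∏ i ∈ s, f i) = ∑ i ∈ s, phi K (f i) := by
  have : phi K (∏ i ∈ s, f i) = phiHom (Additive.ofMul (∏ i ∈ s, f i)) := rfl
  rw [this, ofMul_prod, map_sum]
  rfl

lemma phi_intVec (c : Fin (rank K) → ℤ) :
    ∃ u : (𝓞 K)ˣ, phi K u = fun i => (c i : ℚ) := by
  refine ⟨∏ i, fundSystem K i ^ c i, ?_⟩
  have h := fun_eq_repr (K := K) (x := ∏ i, fundSystem K i ^ c i) (f := c)
    (one_mem (torsion K)) (one_mul _).symm
  funext i
  simp only [phi]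
  rw [← congrFun h i]

lemma exists_subspace (F : IntermediateField ℚ K) :
    ∃ W : Submodule ℚ (Fin (rank K) → ℚ),
      Module.finrank ℚ W ≤ rank F ∧
      ∀ u : (𝓞 K)ˣ, ((u : 𝓞 K) : K) ∈ F → phi K u ∈ W := by
  set j : (𝓞 F)ˣ →* (𝓞 K)ˣ :=
    Units.map (RingOfIntegers.mapRingHom (algebraMap F K)).toMonoidHom with hj
  set g : Fin (rank F) → (Fin (rank K) → ℚ) := fun i => phi K (j (fundSystem F i)) with hg
  refine ⟨Submodule.span ℚ (Set.range g), ?_, ?_⟩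
  · simpa [Set.finrank] using finrank_range_le_card (R := ℚ) g
  · intro u hu
    -- build a unit `v` of `𝓞 F` mapping to `u`
    have hinvK : ((↑(u⁻¹ : (𝓞 K)ˣ) : 𝓞 K) : K) = (((u : 𝓞 K) : K))⁻¹ := by
      have h1 : ((↑(u : (𝓞 K)ˣ) : 𝓞 K) : K) * ((↑(u⁻¹ : (𝓞 K)ˣ) : 𝓞 K) : K) = 1 := by
        rw [RingOfIntegers.coe_eq_algebraMap, RingOfIntegers.coe_eq_algebraMap, ← map_mul,
          Units.mul_inv, map_one]
      exact eq_inv_of_mul_eq_one_right h1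
    have huinv : ((↑(u⁻¹ : (𝓞 K)ˣ) : 𝓞 K) : K) ∈ F := by
      rw [hinvK]; exact F.inv_mem hu
    have hxint : IsIntegral ℤ ((⟨_, hu⟩ : F)) := by
      rw [← isIntegral_algebraMap_iff (A := F) (B := K) (algebraMap (↥F) K).injective]
      exact RingOfIntegers.isIntegral_coe u.1
    have hyint : IsIntegral ℤ ((⟨_, huinv⟩ : F)) := by
      rw [← isIntegral_algebraMap_iff (A := F) (B := K) (algebraMap (↥F) K).injective]
      exact RingOfIntegers.isIntegral_coe (u⁻¹).1
    have h1 : ((⟨_, hu⟩ : F)) * ((⟨_, huinv⟩ : F)) = 1 := by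
      apply Subtype.ext
      show ((↑(u : (𝓞 K)ˣ) : 𝓞 K) : K) * ((↑(u⁻¹ : (𝓞 K)ˣ) : 𝓞 K) : K) = 1
      rw [RingOfIntegers.coe_eq_algebraMap, RingOfIntegers.coe_eq_algebraMap, ← map_mul,
        Units.mul_inv, map_one]
    have h2 : ((⟨_, huinv⟩ : F)) * ((⟨_, hu⟩ : F)) = 1 := by rw [mul_comm]; exact h1
    set v : (𝓞 F)ˣ := ⟨⟨_, hxint⟩, ⟨_, hyint⟩,
      by apply RingOfIntegers.ext; exact h1,
      by apply RingOfIntegers.ext; exact h2⟩ with hvdef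
    have hju : j v = u := by
      apply Units.ext
      apply RingOfIntegers.ext
      rfl
    obtain ⟨⟨ζ, e⟩, hv, -⟩ := exist_unique_eq_mul_prod (↥F) v
    have hdecomp : u = j ↑ζ * ∏ i, (j (fundSystem F i)) ^ (e i) := by
      rw [← hju, hv]
      simp [map_mul, map_prod, map_zpow]
    have hphi : phi K u = ∑ i, (e i) • phi K (j (fundSystem F i)) := by
      rw [hdecomp, phi_mul, phi_prod, phi_torsion (by
        rw [torsion, CommGroup.mem_torsion]
        exact j.isOfFinOrder ζ.2), zero_add]
      refine Finset.sum_congr rfl fun i _ => ?_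
      rw [phi_zpow]
    rw [hphi]
    exact Submodule.sum_mem _ fun i _ => Submodule.smul_of_tower_mem _ _
      (Submodule.subset_span ⟨i, rfl⟩)

lemma exists_functional {V : Type*} [AddCommGroup V] [Module ℚ V] [FiniteDimensional ℚ V]
    {W : Submodule ℚ V} (hW : W ≠ ⊤) :
    ∃ f : V →ₗ[ℚ] ℚ, f ≠ 0 ∧ W ≤ LinearMap.ker f := by
  obtain ⟨v, hv⟩ : ∃ v, v ∉ W := by
    by_contra h
    push_neg at h
    exact hW (Submodule.eq_top_iff'.mpr h)
  have hqv : W.mkQ v ≠ 0 := by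
    simpa [Submodule.Quotient.mk_eq_zero] using hv
  have := (Module.forall_dual_apply_eq_zero_iff ℚ (W.mkQ v)).not.mpr hqv
  push_neg at this
  obtain ⟨g, hg⟩ := this
  refine ⟨g.comp W.mkQ, fun h => hg ?_, fun w hw => ?_⟩
  · have := congrFun (congrArg (fun f => f.toFun) h) v
    simpa using this
  · simp [LinearMap.mem_ker, (Submodule.Quotient.mk_eq_zero _).mpr hw]

/-- The polynomial attached to a functional. -/
def polyOf {r : ℕ} (f : (Fin r → ℚ) →ₗ[ℚ] ℚ) : Polynomial ℚ :=
  ∑ j : Fin r, Polynomial.C (f (Pi.single j 1)) * Polynomial.X ^ (j : ℕ)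

lemma polyOf_eval {r : ℕ} (f : (Fin r → ℚ) →ₗ[ℚ] ℚ) (t : ℚ) :
    (polyOf f).eval t = f (fun j => t ^ (j : ℕ)) := by
  have hx : (fun j : Fin r => t ^ (j : ℕ))
      = ∑ j : Fin r, (t ^ (j : ℕ)) • (Pi.single j 1 : Fin r → ℚ) := by
    rw [← Finset.univ_sum_single (fun j : Fin r => t ^ (j : ℕ))]
    refine Finset.sum_congr rfl fun j _ => ?_
    funext k
    by_cases h : j = k <;> simp [Pi.single_apply, h]
  rw [hx, map_sum, polyOf, Polynomial.eval_finset_sum]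
  refine Finset.sum_congr rfl fun j _ => ?_
  rw [Polynomial.eval_mul, Polynomial.eval_C, Polynomial.eval_pow, Polynomial.eval_X,
    map_smul, smul_eq_mul, mul_comm]

lemma polyOf_ne_zero {r : ℕ} {f : (Fin r → ℚ) →ₗ[ℚ] ℚ} (hf : f ≠ 0) : polyOf f ≠ 0 := by
  obtain ⟨j₀, hj₀⟩ : ∃ j : Fin r, f (Pi.single j 1) ≠ 0 := by
    by_contra h
    push_neg at h
    refine hf ((Pi.basisFun ℚ (Fin r)).ext fun i => ?_)
    simpa using h i
  intro hp
  have : (polyOf f).coeff (j₀ : ℕ) = f (Pi.single j₀ 1) := by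
    rw [polyOf, Polynomial.finset_sum_coeff]
    rw [Finset.sum_eq_single j₀]
    · simp
    · intro b _ hb
      have hne : (j₀ : ℕ) ≠ (b : ℕ) := fun h => hb (Fin.val_injective h).symm
      rw [Polynomial.coeff_C_mul, Polynomial.coeff_X_pow, if_neg hne, mul_zero]
    · simp
  rw [hp] at this
  simp at this
  exact hj₀ this.symm

lemma exists_int_avoid {r : ℕ} (S : Finset (Submodule ℚ (Fin r → ℚ))) (hS : ∀ W ∈ S, W ≠ ⊤) :
    ∃ c : Fin r → ℤ, ∀ W ∈ S, (fun i => ((c i : ℚ))) ∉ W := by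
  classical
  choose f hf0 hfker using fun (W : S) => exists_functional (hS W.1 W.2)
  set P : Polynomial ℚ := ∏ W : S, polyOf (f W) with hP
  have hPne : P ≠ 0 := Finset.prod_ne_zero_iff.mpr fun W _ => polyOf_ne_zero (hf0 W)
  have hroots : {t : ℕ | P.IsRoot (t : ℚ)}.Finite := by
    refine Set.Finite.preimage ?_ (Polynomial.finite_setOf_isRoot hPne)
    exact Function.Injective.injOn (fun a b h => by exact_mod_cast h)
  obtain ⟨t, ht⟩ := hroots.infinite_compl.nonempty
  refine ⟨fun j => (t : ℤ) ^ (j : ℕ), fun W hW hmem => ?_⟩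
  have heval : (polyOf (f ⟨W, hW⟩)).eval (t : ℚ) ≠ 0 := by
    intro h
    apply ht
    show P.IsRoot (t : ℚ)
    rw [hP, Polynomial.IsRoot, Polynomial.eval_prod]
    exact Finset.prod_eq_zero (Finset.mem_univ (⟨W, hW⟩ : S)) h
  apply heval
  rw [polyOf_eval]
  have : (fun j : Fin r => ((t : ℚ)) ^ (j : ℕ))
      = fun i : Fin r => (((t : ℤ) ^ (i : ℕ) : ℤ) : ℚ) := by
    funext i; push_cast; ring
  rw [this]
  exact hfker ⟨W, hW⟩ hmem

end Stmt18Aux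

open Stmt18Aux in
/-- In a totally real number field `K` of degree `d ≥ 2` there is a unit `α ∈ O_K^×` such
that for every positive integer `n`, `ℚ(α^n) = K`; equivalently the minimal polynomial of
`α^n` over `ℚ` has degree `d` for every `n ≥ 1`. -/
theorem stmt_18 (K : Type*) [Field K] [NumberField K] (d : ℕ) (hd : 2 ≤ d)
    (hdeg : Module.finrank ℚ K = d)
    (htotreal : ∀ ψ : K →+* ℂ, ∀ θ : K, (ψ θ).im = 0) :
    ∃ α : (NumberField.RingOfIntegers K)ˣ, ∀ n : ℕ, 0 < n →
      IntermediateField.adjoin ℚ {((α : NumberField.RingOfIntegers K) : K) ^ n} = ⊤ ∧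
      (minpoly ℚ (((α : NumberField.RingOfIntegers K) : K) ^ n)).natDegree = d := by
  classical
  -- every infinite place is real
  have hreal : ∀ w : InfinitePlace K, w.IsReal := by
    intro w
    rw [NumberField.InfinitePlace.isReal_iff, NumberField.ComplexEmbedding.isReal_iff]
    apply RingHom.ext
    intro θ
    rw [NumberField.ComplexEmbedding.conjugate_coe_eq]
    exact Complex.conj_eq_iff_im.mpr (htotreal _ θ)
  have hcomplex : nrComplexPlaces K = 0 :=
    Fintype.card_eq_zero_iff.mpr ⟨fun ⟨w, hw⟩ =>
      (NumberField.InfinitePlace.not_isReal_iff_isComplex.mpr hw) (hreal w)⟩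
  have hc1 := card_eq_nrRealPlaces_add_nrComplexPlaces K
  have hc2 := card_add_two_mul_card_eq_rank K
  rw [hdeg] at hc2
  have hcard : Fintype.card (InfinitePlace K) = d := by omega
  have hrankK : rank K = d - 1 := by rw [rank, hcard]
  -- finiteness of intermediate fields
  haveI : Finite (IntermediateField ℚ K) :=
    Field.finite_intermediateField_of_exists_primitive_element ℚ K
      (Field.exists_primitive_element ℚ K)
  letI : Fintype (IntermediateField ℚ K) := Fintype.ofFinite _
  -- for each intermediate field, a subspace capturing units inside it
  choose Wfun hWrank hWmem using fun F : IntermediateField ℚ K => exists_subspace F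
  set S : Finset (Submodule ℚ (Fin (rank K) → ℚ)) :=
    (Finset.univ.filter (fun F : IntermediateField ℚ K => F ≠ ⊤)).image Wfun with hSdef
  have hS : ∀ W ∈ S, W ≠ ⊤ := by
    intro W hW
    rw [hSdef, Finset.mem_image] at hW
    obtain ⟨F, hF, rfl⟩ := hW
    have hFne : F ≠ ⊤ := (Finset.mem_filter.mp hF).2
    -- finrank of F is < d
    have hsub : Subalgebra.toSubmodule F.toSubalgebra ≠ ⊤ := by
      intro h
      exact hFne (IntermediateField.toSubalgebra_injective
        (by rw [IntermediateField.top_toSubalgebra]; exact Algebra.toSubmodule_eq_top.mp h))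
    have hlt : Module.finrank ℚ (Subalgebra.toSubmodule F.toSubalgebra) < Module.finrank ℚ K :=
      Submodule.finrank_lt hsub
    have hfr : Module.finrank ℚ F < d := by
      rw [← hdeg]; exact hlt
    -- rank of F is < rank of K
    have hF1 := card_eq_nrRealPlaces_add_nrComplexPlaces F
    have hF2 := card_add_two_mul_card_eq_rank F
    have hrF : rank F < rank K := by
      rw [rank, rank, hcard]
      omega
    intro htop
    have := hWrank F
    rw [htop] at this
    rw [finrank_top, Module.finrank_fin_fun] at this
    omega
  obtain ⟨c, hc⟩ := exists_int_avoid S hS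
  obtain ⟨α, hα⟩ := phi_intVec c
  refine ⟨α, fun n hn => ?_⟩
  have key : IntermediateField.adjoin ℚ
      {((α : NumberField.RingOfIntegers K) : K) ^ n} = ⊤ := by
    by_contra hne
    set F := IntermediateField.adjoin ℚ {((α : NumberField.RingOfIntegers K) : K) ^ n} with hFdef
    have hmemS : Wfun F ∈ S := by
      rw [hSdef]
      exact Finset.mem_image_of_mem Wfun (Finset.mem_filter.mpr ⟨Finset.mem_univ _, hne⟩)
    have hco : ((↑(α ^ n : (𝓞 K)ˣ) : 𝓞 K) : K) = ((α : 𝓞 K) : K) ^ n := by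
      rw [Units.val_pow_eq_pow_val, RingOfIntegers.coe_eq_algebraMap, map_pow]
    have hmemF : ((↑(α ^ n : (𝓞 K)ˣ) : 𝓞 K) : K) ∈ F := by
      rw [hco, hFdef]
      exact IntermediateField.mem_adjoin_simple_self ℚ _
    have h1 : phi K (α ^ n) ∈ Wfun F := hWmem F (α ^ n) hmemF
    rw [phi_pow] at h1
    have h2 : phi K α ∈ Wfun F := by
      have : phi K α = ((n : ℚ))⁻¹ • ((n : ℚ) • phi K α) := by
        rw [smul_smul, inv_mul_cancel₀ (Nat.cast_ne_zero.mpr hn.ne'), one_smul]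
      rw [this]
      exact Submodule.smul_mem _ _ h1
    rw [hα] at h2
    exact hc (Wfun F) hmemS h2
  refine ⟨key, ?_⟩
  have hxint : IsIntegral ℚ (((α : NumberField.RingOfIntegers K) : K) ^ n) :=
    IsIntegral.of_finite ℚ _
  rw [← IntermediateField.adjoin.finrank hxint]
  rw [show IntermediateField.adjoin ℚ
      {((α : NumberField.RingOfIntegers K) : K) ^ n} = ⊤ from key]
  rw [IntermediateField.finrank_top', hdeg]

end
end
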